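/- arXiv:1408.0469 — 7 statements merged into one kernel-verified Lean document; each statement's English description precedes it below -/
import Mathlib

section
/- Let n_T ≥ 2 be an integer, φ > 0 and δ ∈ (0,1) real numbers. Let X and Y be independent real random variables with X ~ Gamma(1,1) (i.e. exponential with rate 1) and Y ~ Gamma(n_T − 1, 1). Define γ := φ(X + (1−δ)Y)/(φδY + 1). Then for every x ≥ 1/δ − 1, P(γ ≥ x) = δ^{−(n_T−1)} e^{−x/φ} / (1 + x)^{n_T − 1}. -/
open MeasureTheory ProbabilityTheory

open Real Set in
/-- Tail of the unit-rate exponential = Gamma(1,1). -/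
lemma gamma_one_tail {c : ℝ} (hc : 0 ≤ c) :
    gammaMeasure 1 1 (Set.Ici c) = ENNReal.ofReal (Real.exp (-c)) := by
  rw [gammaMeasure, withDensity_apply _ measurableSet_Ici]
  have h1 : ∀ y ∈ Ici c, gammaPDF 1 1 y = ENNReal.ofReal (Real.exp (-y)) := by
    intro y hy
    rw [gammaPDF_of_nonneg (hc.trans hy)]
    norm_num [Real.Gamma_one, Real.rpow_natCast]
  rw [setLIntegral_congr_fun measurableSet_Ici h1,
    ← restrict_Ioi_eq_restrict_Ici,
    ← ofReal_integral_eq_lintegral_ofReal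
      (by simpa [IntegrableOn] using exp_neg_integrableOn_Ioi c one_pos)
      (ae_of_all _ fun y => (Real.exp_pos _).le),
    integral_exp_neg_Ioi]

open Real Set in
/-- Laplace transform of the Gamma(k,1) distribution. -/
lemma gamma_laplace {k a b : ℝ} (hk : 0 < k) (ha : 0 ≤ a) :
    ∫⁻ y, ENNReal.ofReal (Real.exp (-(a * y + b))) ∂(gammaMeasure k 1)
      = ENNReal.ofReal (Real.exp (-b) * (1 + a) ^ (-k)) := by
  have h1a : (0:ℝ) < 1 + a := by linarith
  have hmeas : Measurable fun y : ℝ => ENNReal.ofReal (Real.exp (-(a * y + b))) :=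
    (((measurable_const.mul measurable_id).add_const b).neg.exp).ennreal_ofReal
  have hpdfm : Measurable (gammaPDF k 1) := (measurable_gammaPDFReal k 1).ennreal_ofReal
  rw [gammaMeasure, lintegral_withDensity_eq_lintegral_mul _ hpdfm hmeas]
  have key : ∀ y : ℝ, (gammaPDF k 1 * fun y => ENNReal.ofReal (Real.exp (-(a * y + b)))) y
      = ENNReal.ofReal (Real.exp (-b) * (1 + a) ^ (-k)) * gammaPDF k (1 + a) y := by
    intro y
    simp only [Pi.mul_apply]
    rcases lt_or_ge y 0 with hy | hy
    · rw [gammaPDF_of_neg hy, gammaPDF_of_neg hy, zero_mul, mul_zero]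
    · rw [gammaPDF_of_nonneg hy, gammaPDF_of_nonneg hy,
        ← ENNReal.ofReal_mul (by positivity), ← ENNReal.ofReal_mul (by positivity)]
      congr 1
      have hexp : Real.exp (-(1 * y)) * Real.exp (-(a * y + b))
          = Real.exp (-((1 + a) * y)) * Real.exp (-b) := by
        rw [← Real.exp_add, ← Real.exp_add]; ring_nf
      have hpow : ((1:ℝ) + a) ^ (-k) = (((1:ℝ) + a) ^ k)⁻¹ := by
        rw [Real.rpow_neg h1a.le]
      have hGk : Real.Gamma k ≠ 0 := (Real.Gamma_pos_of_pos hk).ne'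
      have hM : ((1:ℝ) + a) ^ k ≠ 0 := (Real.rpow_pos_of_pos h1a k).ne'
      calc (1:ℝ) ^ k / Real.Gamma k * y ^ (k - 1) * Real.exp (-(1 * y))
            * Real.exp (-(a * y + b))
          = (1 / Real.Gamma k * y ^ (k - 1))
            * (Real.exp (-(1 * y)) * Real.exp (-(a * y + b))) := by
            rw [Real.one_rpow]; ring
        _ = (1 / Real.Gamma k * y ^ (k - 1))
            * (Real.exp (-((1 + a) * y)) * Real.exp (-b)) := by rw [hexp]
        _ = Real.exp (-b) * (1 + a) ^ (-k)
            * ((1 + a) ^ k / Real.Gamma k * y ^ (k - 1) * Real.exp (-((1 + a) * y))) := by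
            rw [hpow]; field_simp
  simp_rw [key]
  have hpdfm2 : Measurable (gammaPDF k (1 + a)) := (measurable_gammaPDFReal k (1 + a)).ennreal_ofReal
  rw [lintegral_const_mul _ hpdfm2,
    lintegral_gammaPDF_eq_one hk h1a, mul_one]

/-- Equation (20): closed-form tail of the first selected user's SINR. If
`X ~ Gamma(1,1)` and `Y ~ Gamma(nT-1,1)` are independent and
`γ = φ(X + (1-δ)Y)/(φδY + 1)`, then for `x ≥ 1/δ - 1`,
`P(γ ≥ x) = δ^{-(nT-1)} e^{-x/φ}/(1+x)^{nT-1}`. -/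
theorem stmt_1 {Ω : Type*} [MeasurableSpace Ω] (μ : Measure Ω) [IsProbabilityMeasure μ]
    (nT : ℕ) (hnT : 2 ≤ nT) (φ δ : ℝ) (hφ : 0 < φ) (hδ : δ ∈ Set.Ioo (0:ℝ) 1)
    (X Y : Ω → ℝ) (hX : Measurable X) (hY : Measurable Y)
    (hXlaw : μ.map X = gammaMeasure 1 1)
    (hYlaw : μ.map Y = gammaMeasure ((nT : ℝ) - 1) 1)
    (hindep : IndepFun X Y μ) :
    ∀ x : ℝ, 1 / δ - 1 ≤ x →
      μ {ω | x ≤ φ * (X ω + (1 - δ) * Y ω) / (φ * δ * Y ω + 1)}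
        = ENNReal.ofReal ((δ ^ (nT - 1))⁻¹ * Real.exp (-x / φ) / (1 + x) ^ (nT - 1)) := by
  intro x hx
  obtain ⟨hδ0, hδ1⟩ := hδ
  have hk : (0:ℝ) < (nT : ℝ) - 1 := by
    have : (2:ℝ) ≤ (nT : ℝ) := by exact_mod_cast hnT
    linarith
  set k : ℝ := (nT : ℝ) - 1 with hkdef
  -- x is positive-ish
  have hx0 : 0 < x := by
    have h1δ : 1 < 1 / δ := one_lt_one_div hδ0 hδ1
    linarith
  set a : ℝ := x * δ - (1 - δ) with hadef
  set b : ℝ := x / φ with hbdef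
  have ha : 0 ≤ a := by
    have h : (1 / δ - 1) * δ = 1 - δ := by field_simp
    nlinarith
  have hb : 0 < b := div_pos hx0 hφ
  have hfb : φ * b = x := by rw [hbdef]; field_simp
  -- a.e. nonnegativity of Y
  have hYneg : μ {ω | Y ω < 0} = 0 := by
    have : {ω | Y ω < 0} = Y ⁻¹' Set.Iio 0 := rfl
    rw [this, ← Measure.map_apply hY measurableSet_Iio, hYlaw, gammaMeasure,
      withDensity_apply _ measurableSet_Iio, lintegral_gammaPDF_of_nonpos le_rfl]
  -- event rewriting
  have hseteq : μ {ω | x ≤ φ * (X ω + (1 - δ) * Y ω) / (φ * δ * Y ω + 1)}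
      = μ {ω | a * Y ω + b ≤ X ω} := by
    apply measure_congr
    rw [Filter.eventuallyEq_set]
    have hYae : ∀ᵐ ω ∂μ, 0 ≤ Y ω := by
      rw [ae_iff]; simpa [not_le] using hYneg
    filter_upwards [hYae] with ω hω
    have hd : (0:ℝ) < φ * δ * Y ω + 1 := by positivity
    show x ≤ _ / _ ↔ _
    rw [le_div_iff₀ hd]
    have hid : x * (φ * δ * Y ω + 1) = φ * (a * Y ω + b) + φ * (1 - δ) * Y ω := by
      simp only [hadef]; linear_combination -hfb
    rw [hid]
    constructor <;> intro h <;> nlinarith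
  rw [hseteq]
  -- use independence
  haveI hPX : IsProbabilityMeasure (gammaMeasure 1 1) :=
    isProbabilityMeasure_gammaMeasure one_pos one_pos
  haveI hPY : IsProbabilityMeasure (gammaMeasure k 1) :=
    isProbabilityMeasure_gammaMeasure hk one_pos
  have hmap : μ.map (fun ω => (Y ω, X ω)) = (μ.map Y).prod (μ.map X) :=
    (indepFun_iff_map_prod_eq_prod_map_map hY.aemeasurable hX.aemeasurable).mp hindep.symm
  have hs : MeasurableSet {p : ℝ × ℝ | a * p.1 + b ≤ p.2} :=
    measurableSet_le (by fun_prop) measurable_snd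
  have h1 : {ω | a * Y ω + b ≤ X ω} = (fun ω => (Y ω, X ω)) ⁻¹' {p : ℝ × ℝ | a * p.1 + b ≤ p.2} :=
    rfl
  rw [h1, ← Measure.map_apply (hY.prodMk hX) hs, hmap, hYlaw, hXlaw, Measure.prod_apply hs]
  have hslice : ∀ y : ℝ, (Prod.mk y ⁻¹' {p : ℝ × ℝ | a * p.1 + b ≤ p.2}) = Set.Ici (a * y + b) :=
    fun y => rfl
  simp_rw [hslice]
  have hYae' : ∀ᵐ y ∂(gammaMeasure k 1), 0 ≤ y := by
    rw [ae_iff]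
    have : {y : ℝ | ¬ 0 ≤ y} = Set.Iio 0 := by ext y; simp [not_le]
    rw [this, gammaMeasure, withDensity_apply _ measurableSet_Iio,
      lintegral_gammaPDF_of_nonpos le_rfl]
  have hcong : ∫⁻ y, gammaMeasure 1 1 (Set.Ici (a * y + b)) ∂(gammaMeasure k 1)
      = ∫⁻ y, ENNReal.ofReal (Real.exp (-(a * y + b))) ∂(gammaMeasure k 1) := by
    apply lintegral_congr_ae
    filter_upwards [hYae'] with y hy
    exact gamma_one_tail (by positivity)
  rw [hcong, gamma_laplace hk ha]
  -- final algebra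
  congr 1
  have h1a : (1:ℝ) + a = δ * (1 + x) := by simp only [hadef]; ring
  have h1x : (0:ℝ) < 1 + x := by linarith
  have hnT1 : ((nT - 1 : ℕ) : ℝ) = k := by
    have : (1:ℕ) ≤ nT := by omega
    push_cast [this]
    ring
  rw [h1a, Real.rpow_neg (by positivity), ← hnT1, Real.rpow_natCast, mul_pow]
  rw [hbdef, neg_div]
  field_simp
end

section
/- Let n_T and n be integers with 2 ≤ n ≤ n_T, let φ > 0 and x > 0 be real, and set a = (n_T − 1)/(2n_T − 1). Then ∫_x^∞ e^{−t/φ} (t − x)^{n−2} (t + a)^{−(2n_T−1)} dt < ∫_x^∞ e^{−t/φ} (t − x)^{n−2} (t + 1)^{−(n_T−1)} t^{−n_T} dt < ∫_x^∞ e^{−t/φ} (t − x)^{n−2} t^{−(2n_T−1)} dt. -/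
open MeasureTheory Set

/-- Strict comparison of integrals over `Ioi x`. -/
lemma aux_integral_lt {f g : ℝ → ℝ} {x : ℝ}
    (hf : IntegrableOn f (Ioi x)) (hg : IntegrableOn g (Ioi x))
    (h : ∀ t ∈ Ioi x, f t < g t) :
    ∫ t in Ioi x, f t < ∫ t in Ioi x, g t := by
  have hpos : 0 < ∫ t in Ioi x, (g t - f t) := by
    rw [setIntegral_pos_iff_support_of_nonneg_ae]
    · have hsub : Ioi x ⊆ Function.support fun t => g t - f t := by
        intro t ht
        have := h t ht
        simp only [Function.mem_support]
        intro hc; linarith [sub_eq_zero.mp hc]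
      rw [inter_eq_right.mpr hsub]
      simp [Real.volume_Ioi]
    · refine ae_restrict_of_forall_mem measurableSet_Ioi fun t ht => ?_
      simp only [Pi.zero_apply]
      have := h t ht
      show (0:ℝ) ≤ g t - f t
      linarith
    · exact hg.sub hf
  have heq := integral_sub hg hf
  rw [heq] at hpos
  linarith

/-- Integrability of the base function `exp(-t/φ) (t-x)^k` on `Ioi x`. -/
lemma aux_base_integrable (k : ℕ) {φ x : ℝ} (hφ : 0 < φ) (hx : 0 ≤ x) :
    IntegrableOn (fun t : ℝ => Real.exp (-t / φ) * (t - x) ^ k) (Ioi x) := by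
  have hb : (0:ℝ) < 1 / (2 * φ) := by positivity
  refine integrable_of_isBigO_exp_neg hb
    (Continuous.continuousOn (by continuity)) ?_
  have h1 : (fun t : ℝ => (t - x) ^ k) =O[Filter.atTop] fun t : ℝ => t ^ k := by
    refine Asymptotics.IsBigO.of_bound 1 ?_
    filter_upwards [Filter.eventually_ge_atTop x] with t ht
    have h0 : (0:ℝ) ≤ t - x := by linarith
    have h0' : (0:ℝ) ≤ t := by linarith
    rw [one_mul, Real.norm_eq_abs, Real.norm_eq_abs, abs_of_nonneg (pow_nonneg h0 _),
      abs_of_nonneg (pow_nonneg h0' _)]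
    exact pow_le_pow_left₀ h0 (by linarith) k
  have h2 : (fun t : ℝ => (t - x) ^ k) =o[Filter.atTop]
      fun t : ℝ => Real.exp (1 / (2 * φ) * t) :=
    h1.trans_isLittleO (isLittleO_pow_exp_pos_mul_atTop k hb)
  have h3 := (Asymptotics.isBigO_refl (fun t : ℝ => Real.exp (-t / φ)) Filter.atTop).mul
    h2.isBigO
  refine h3.congr' (Filter.Eventually.of_forall fun t => rfl)
    (Filter.Eventually.of_forall fun t => ?_)
  show Real.exp (-t / φ) * Real.exp (1 / (2 * φ) * t) = Real.exp (-(1 / (2 * φ)) * t)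
  rw [← Real.exp_add]
  congr 1
  field_simp
  ring

/-- Integrability of the general integrand. -/
lemma aux_integrable (k m p : ℕ) {φ x : ℝ} (hφ : 0 < φ) (hx : 0 < x)
    {c d : ℝ} (hc : 0 ≤ c) (hd : 0 ≤ d) :
    IntegrableOn (fun t : ℝ => Real.exp (-t / φ) * (t - x) ^ k * ((t + c) ^ m)⁻¹
      * ((t + d) ^ p)⁻¹) (Ioi x) := by
  have hbase := aux_base_integrable k hφ hx.le
  refine Integrable.mono' ((hbase.mul_const ((x ^ m)⁻¹)).mul_const ((x ^ p)⁻¹)) ?_ ?_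
  · refine ContinuousOn.aestronglyMeasurable ?_ measurableSet_Ioi
    refine ContinuousOn.mul (ContinuousOn.mul (Continuous.continuousOn (by continuity)) ?_) ?_
    · refine ((continuousOn_id.add continuousOn_const).pow m).inv₀ fun t ht => ?_
      simp only [mem_Ioi] at ht
      have h0 : (0:ℝ) < t + c := by nlinarith
      exact pow_ne_zero _ h0.ne'
    · refine ((continuousOn_id.add continuousOn_const).pow p).inv₀ fun t ht => ?_
      simp only [mem_Ioi] at ht
      have h0 : (0:ℝ) < t + d := by nlinarith
      exact pow_ne_zero _ h0.ne' 
  · refine ae_restrict_of_forall_mem measurableSet_Ioi fun t ht => ?_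
    simp only [mem_Ioi] at ht
    have htx : 0 < t - x := by linarith
    have htc : x ≤ t + c := by linarith
    have htd : x ≤ t + d := by linarith
    have htc0 : (0:ℝ) < t + c := lt_of_lt_of_le hx htc
    have htd0 : (0:ℝ) < t + d := lt_of_lt_of_le hx htd
    have hE : 0 ≤ Real.exp (-t / φ) * (t - x) ^ k := by positivity
    have hfn : 0 ≤ Real.exp (-t / φ) * (t - x) ^ k * ((t + c) ^ m)⁻¹ * ((t + d) ^ p)⁻¹ := by
      positivity
    rw [Real.norm_eq_abs, abs_of_nonneg hfn]
    have h1 : ((t + c) ^ m)⁻¹ ≤ (x ^ m)⁻¹ :=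
      inv_anti₀ (by positivity) (pow_le_pow_left₀ hx.le htc m)
    have h2 : ((t + d) ^ p)⁻¹ ≤ (x ^ p)⁻¹ :=
      inv_anti₀ (by positivity) (pow_le_pow_left₀ hx.le htd p)
    have step1 : Real.exp (-t / φ) * (t - x) ^ k * ((t + c) ^ m)⁻¹
        ≤ Real.exp (-t / φ) * (t - x) ^ k * (x ^ m)⁻¹ :=
      mul_le_mul_of_nonneg_left h1 hE
    calc Real.exp (-t / φ) * (t - x) ^ k * ((t + c) ^ m)⁻¹ * ((t + d) ^ p)⁻¹
        ≤ Real.exp (-t / φ) * (t - x) ^ k * (x ^ m)⁻¹ * ((t + d) ^ p)⁻¹ :=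
          mul_le_mul_of_nonneg_right step1 (by positivity)
      _ ≤ Real.exp (-t / φ) * (t - x) ^ k * (x ^ m)⁻¹ * (x ^ p)⁻¹ :=
          mul_le_mul_of_nonneg_left h2 (by positivity)

/-- Strict weighted AM-GM in the needed form. -/
lemma aux_amgm (nT : ℕ) (h2 : 2 ≤ nT) {t : ℝ} (ht : 0 < t) :
    (t + 1) ^ (nT - 1) * t ^ nT
      < (t + ((nT : ℝ) - 1) / (2 * (nT : ℝ) - 1)) ^ (2 * nT - 1) := by
  set N : ℝ := (nT : ℝ) with hN
  have hN2 : (2:ℝ) ≤ N := by rw [hN]; exact_mod_cast h2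
  have hden : (0:ℝ) < 2 * N - 1 := by linarith
  set w1 : ℝ := (N - 1) / (2 * N - 1) with hw1
  set w2 : ℝ := N / (2 * N - 1) with hw2
  have hw1pos : 0 < w1 := by apply div_pos <;> linarith
  have hw2pos : 0 < w2 := by apply div_pos <;> linarith
  have hsum : w1 + w2 = 1 := by
    rw [hw1, hw2, ← add_div, div_eq_one_iff_eq hden.ne']; ring
  have hmem1 : t + 1 ∈ Ioi (0:ℝ) := by simp; linarith
  have hmem2 : t ∈ Ioi (0:ℝ) := ht
  have hne : t + 1 ≠ t := by linarith
  have hlog := strictConcaveOn_log_Ioi.2 hmem1 hmem2 hne hw1pos hw2pos hsum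
  simp only [smul_eq_mul] at hlog
  have hcomb : w1 * (t + 1) + w2 * t = t + w1 := by
    have h' : w1 * (t + 1) + w2 * t = (w1 + w2) * t + w1 := by ring
    rw [h', hsum, one_mul]
  rw [hcomb] at hlog
  -- multiply by 2N-1
  have hlog2 : (N - 1) * Real.log (t + 1) + N * Real.log t
      < (2 * N - 1) * Real.log (t + w1) := by
    have hm := mul_lt_mul_of_pos_left hlog hden
    have e1 : (2 * N - 1) * w1 = N - 1 := by rw [hw1]; field_simp
    have e2 : (2 * N - 1) * w2 = N := by rw [hw2]; field_simp
    have expand : (2 * N - 1) * (w1 * Real.log (t + 1) + w2 * Real.log t)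
        = ((2 * N - 1) * w1) * Real.log (t + 1) + ((2 * N - 1) * w2) * Real.log t := by ring
    rw [expand, e1, e2] at hm
    exact hm
  have hexp := Real.exp_lt_exp.mpr hlog2
  have htw : 0 < t + w1 := by linarith
  have lhs : Real.exp ((N - 1) * Real.log (t + 1) + N * Real.log t)
      = (t + 1) ^ (nT - 1) * t ^ nT := by
    rw [Real.exp_add]
    have c1 : (N - 1) = ((nT - 1 : ℕ) : ℝ) := by
      push_cast [Nat.cast_sub (by omega : 1 ≤ nT)]; ring
    have e1 : Real.exp ((N - 1) * Real.log (t + 1)) = (t + 1) ^ (nT - 1) := by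
      rw [c1, ← Real.rpow_natCast (t + 1) (nT - 1), Real.rpow_def_of_pos (by linarith)]
      ring_nf
    have e2 : Real.exp (N * Real.log t) = t ^ nT := by
      rw [hN, ← Real.rpow_natCast t nT, Real.rpow_def_of_pos ht]
      ring_nf
    rw [e1, e2]
  have rhs : Real.exp ((2 * N - 1) * Real.log (t + w1)) = (t + w1) ^ (2 * nT - 1) := by
    have c1 : (2 * N - 1) = ((2 * nT - 1 : ℕ) : ℝ) := by
      push_cast [Nat.cast_sub (by omega : 1 ≤ 2 * nT)]; ring
    rw [c1, ← Real.rpow_natCast (t + w1) (2 * nT - 1), Real.rpow_def_of_pos htw]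
    ring_nf
  rw [lhs, rhs] at hexp
  exact hexp

/-- Lemma 5 in integral form: two-sided bounds on
`V(n-1; -nT+2; -nT+1; 1/φ; x) = ∫_x^∞ e^{-t/φ}(t-x)^{n-2}(t+1)^{-(nT-1)} t^{-nT} dt`. -/
theorem stmt_5 (nT n : ℕ) (h2 : 2 ≤ n) (hn : n ≤ nT) (φ x : ℝ) (hφ : 0 < φ) (hx : 0 < x)
    (a : ℝ) (ha : a = ((nT : ℝ) - 1) / (2 * (nT : ℝ) - 1)) :
    (∫ t in Ioi x, Real.exp (-t / φ) * (t - x) ^ (n - 2) * ((t + a) ^ (2 * nT - 1))⁻¹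
      < ∫ t in Ioi x, Real.exp (-t / φ) * (t - x) ^ (n - 2) * ((t + 1) ^ (nT - 1))⁻¹ * (t ^ nT)⁻¹)
    ∧
    (∫ t in Ioi x, Real.exp (-t / φ) * (t - x) ^ (n - 2) * ((t + 1) ^ (nT - 1))⁻¹ * (t ^ nT)⁻¹
      < ∫ t in Ioi x, Real.exp (-t / φ) * (t - x) ^ (n - 2) * (t ^ (2 * nT - 1))⁻¹) := by
  have hnT : 2 ≤ nT := le_trans h2 hn
  have hNT : (2:ℝ) ≤ (nT : ℝ) := by exact_mod_cast hnT
  have ha0 : 0 ≤ a := by rw [ha]; apply div_nonneg <;> linarith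
  -- integrabilities
  have hI1 : IntegrableOn (fun t : ℝ => Real.exp (-t / φ) * (t - x) ^ (n - 2)
      * ((t + a) ^ (2 * nT - 1))⁻¹) (Ioi x) := by
    have := aux_integrable (n - 2) (2 * nT - 1) 0 hφ hx ha0 le_rfl
    simpa using this
  have hI2 : IntegrableOn (fun t : ℝ => Real.exp (-t / φ) * (t - x) ^ (n - 2)
      * ((t + 1) ^ (nT - 1))⁻¹ * (t ^ nT)⁻¹) (Ioi x) := by
    have := aux_integrable (n - 2) (nT - 1) nT hφ hx zero_le_one le_rfl
    simpa using this
  have hI3 : IntegrableOn (fun t : ℝ => Real.exp (-t / φ) * (t - x) ^ (n - 2)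
      * (t ^ (2 * nT - 1))⁻¹) (Ioi x) := by
    have := aux_integrable (n - 2) (2 * nT - 1) 0 hφ hx le_rfl le_rfl
    simpa using this
  constructor
  · refine aux_integral_lt hI1 hI2 fun t ht => ?_
    simp only [mem_Ioi] at ht
    have ht0 : 0 < t := lt_trans hx ht
    have hE : 0 < Real.exp (-t / φ) * (t - x) ^ (n - 2) := by
      have : 0 < t - x := by linarith
      positivity
    have hkey := aux_amgm nT hnT ht0
    rw [← ha] at hkey
    have hprodpos : 0 < (t + 1) ^ (nT - 1) * t ^ nT := by positivity
    have hinv : ((t + a) ^ (2 * nT - 1))⁻¹ < ((t + 1) ^ (nT - 1) * t ^ nT)⁻¹ :=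
      inv_strictAnti₀ hprodpos hkey
    calc Real.exp (-t / φ) * (t - x) ^ (n - 2) * ((t + a) ^ (2 * nT - 1))⁻¹
        < Real.exp (-t / φ) * (t - x) ^ (n - 2) * ((t + 1) ^ (nT - 1) * t ^ nT)⁻¹ :=
          mul_lt_mul_of_pos_left hinv hE
      _ = Real.exp (-t / φ) * (t - x) ^ (n - 2) * ((t + 1) ^ (nT - 1))⁻¹ * (t ^ nT)⁻¹ := by
          rw [mul_inv]; ring
  · refine aux_integral_lt hI2 hI3 fun t ht => ?_
    simp only [mem_Ioi] at ht
    have ht0 : 0 < t := lt_trans hx ht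
    have hE : 0 < Real.exp (-t / φ) * (t - x) ^ (n - 2) := by
      have : 0 < t - x := by linarith
      positivity
    have hkey : t ^ (2 * nT - 1) < (t + 1) ^ (nT - 1) * t ^ nT := by
      have hsplit : t ^ (2 * nT - 1) = t ^ (nT - 1) * t ^ nT := by
        rw [← pow_add]; congr 1; omega
      rw [hsplit]
      have : t ^ (nT - 1) < (t + 1) ^ (nT - 1) :=
        pow_lt_pow_left₀ (by linarith) ht0.le (by omega)
      exact mul_lt_mul_of_pos_right this (by positivity)
    have hprodpos : 0 < t ^ (2 * nT - 1) := by positivity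
    have hinv : ((t + 1) ^ (nT - 1) * t ^ nT)⁻¹ < (t ^ (2 * nT - 1))⁻¹ :=
      inv_strictAnti₀ hprodpos hkey
    calc Real.exp (-t / φ) * (t - x) ^ (n - 2) * ((t + 1) ^ (nT - 1))⁻¹ * (t ^ nT)⁻¹
        = Real.exp (-t / φ) * (t - x) ^ (n - 2) * ((t + 1) ^ (nT - 1) * t ^ nT)⁻¹ := by
          rw [mul_inv]; ring
      _ < Real.exp (-t / φ) * (t - x) ^ (n - 2) * (t ^ (2 * nT - 1))⁻¹ :=
          mul_lt_mul_of_pos_left hinv hE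
end

section
/- Let n_T ≥ 2 and n ≥ 2 be integers, let φ > 0 and a > 0 be real. Then, as x → +∞, ∫_x^∞ e^{−t/φ} (t − x)^{n−2} [ t^{−(2n_T−1)} − (t + a)^{−(2n_T−1)} ] dt is asymptotically equivalent to (2n_T − 1) · a · Γ(n − 1) φ^{n−1} x^{−2n_T} e^{−x/φ}. -/
open MeasureTheory Set Filter Topology

open Finset in
lemma aux_diff_bounds(p : ℕ) {u a : ℝ} (hu : 0 < u) (ha : 0 < a) :
    ((p:ℝ)+1) * a / (u+a)^(p+2) ≤ (u^(p+1))⁻¹ - ((u+a)^(p+1))⁻¹ ∧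
    (u^(p+1))⁻¹ - ((u+a)^(p+1))⁻¹ ≤ ((p:ℝ)+1) * a / u^(p+2) := by
  have hua : 0 < u + a := by linarith
  set S : ℝ := ∑ i ∈ Finset.range (p+1), (u+a)^i * u^(p - i) with hSdef
  have hgeom : (u+a)^(p+1) - u^(p+1) = S * a := by
    have h := geom_sum₂_mul (u+a) u (p+1)
    simp only [add_sub_cancel_left, Nat.add_sub_cancel] at h
    rw [hSdef, ← h]
  have hSub : S ≤ ((p:ℝ)+1) * (u+a)^p := by
    calc S ≤ ∑ i ∈ Finset.range (p+1), (u+a)^p := by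
          apply Finset.sum_le_sum
          intro i hi
          have hip : i ≤ p := by simpa [Nat.lt_succ_iff] using hi
          calc (u+a)^i * u^(p-i) ≤ (u+a)^i * (u+a)^(p-i) := by
                apply mul_le_mul_of_nonneg_left (pow_le_pow_left₀ hu.le (by linarith) _) (by positivity)
            _ = (u+a)^p := by rw [← pow_add]; congr 1; omega
      _ = ((p:ℝ)+1) * (u+a)^p := by
          rw [Finset.sum_const, Finset.card_range, nsmul_eq_mul]; push_cast; ring
  have hSlb : ((p:ℝ)+1) * u^p ≤ S := by
    calc ((p:ℝ)+1) * u^p = ∑ i ∈ Finset.range (p+1), u^p := by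
          rw [Finset.sum_const, Finset.card_range, nsmul_eq_mul]; push_cast; ring
      _ ≤ S := by
          apply Finset.sum_le_sum
          intro i hi
          have hip : i ≤ p := by simpa [Nat.lt_succ_iff] using hi
          calc u^p = u^i * u^(p-i) := by rw [← pow_add]; congr 1; omega
            _ ≤ (u+a)^i * u^(p-i) := by
                apply mul_le_mul_of_nonneg_right (pow_le_pow_left₀ hu.le (by linarith) _) (by positivity)
  have hSpos : 0 < S := lt_of_lt_of_le (by positivity) hSlb
  have hdiff : (u^(p+1))⁻¹ - ((u+a)^(p+1))⁻¹ = S * a / (u^(p+1) * (u+a)^(p+1)) := by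
    rw [← hgeom]; field_simp
  constructor
  · rw [hdiff, div_le_div_iff₀ (by positivity) (by positivity)]
    calc ((p:ℝ)+1) * a * (u^(p+1) * (u+a)^(p+1))
        = (((p:ℝ)+1) * u^p) * (a * u * (u+a)^(p+1)) := by ring
      _ ≤ S * (a * u * (u+a)^(p+1)) := by
          apply mul_le_mul_of_nonneg_right hSlb (by positivity)
      _ ≤ S * (a * (u+a) * (u+a)^(p+1)) := by
          apply mul_le_mul_of_nonneg_left ?_ hSpos.le
          have : u ≤ u + a := by linarith
          nlinarith [mul_pos (mul_pos ha ha) (pow_pos hua (p+1))]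
      _ = S * a * (u+a)^(p+2) := by ring
  · rw [hdiff, div_le_div_iff₀ (by positivity) (by positivity)]
    calc S * a * u^(p+2) = S * (a * u * u^(p+1)) := by ring
      _ ≤ (((p:ℝ)+1) * (u+a)^p) * (a * u * u^(p+1)) := by
          apply mul_le_mul_of_nonneg_right hSub (by positivity)
      _ ≤ (((p:ℝ)+1) * (u+a)^p) * (a * (u+a) * u^(p+1)) := by
          apply mul_le_mul_of_nonneg_left ?_ (by positivity)
          nlinarith [mul_pos (mul_pos ha ha) (pow_pos hu (p+1))]
      _ = ((p:ℝ)+1) * a * (u^(p+1) * (u+a)^(p+1)) := by ring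

lemma aux_shift (x : ℝ) (F : ℝ → ℝ) : ∫ t in Ioi x, F t = ∫ s in Ioi 0, F (s + x) := by
  have h := (measurePreserving_add_right volume x).setIntegral_preimage_emb
      (measurableEmbedding_addRight x) F (Ioi x)
  rw [show (· + x) ⁻¹' (Ioi x) = Ioi (0:ℝ) by ext s; simp] at h
  exact h.symm

lemma aux_gamma(n : ℕ) (hn : 2 ≤ n) (φ : ℝ) (hφ : 0 < φ) :
    ∫ s in Ioi (0:ℝ), Real.exp (-s/φ) * s^(n-2) = Real.Gamma ((n:ℝ)-1) * φ^(n-1) := by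
  have h1 : (0:ℝ) < (n:ℝ) - 1 := by
    have : (2:ℝ) ≤ n := by exact_mod_cast hn
    linarith
  have h := Real.integral_rpow_mul_exp_neg_mul_Ioi h1 (r := 1/φ) (by positivity)
  rw [show (1:ℝ)/(1/φ) = φ by field_simp] at h
  calc ∫ s in Ioi (0:ℝ), Real.exp (-s/φ) * s^(n-2)
      = ∫ t in Ioi (0:ℝ), t ^ ((n:ℝ) - 1 - 1) * Real.exp (-(1/φ * t)) := by
        apply setIntegral_congr_fun measurableSet_Ioi
        intro t ht
        rw [show (n:ℝ) - 1 - 1 = ((n - 2 : ℕ) : ℝ) by rw [Nat.cast_sub (by omega)]; push_cast; ring]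
        simp only [Real.rpow_natCast]
        rw [show -(1/φ * t) = -t/φ by ring]
        ring
    _ = φ ^ ((n:ℝ)-1) * Real.Gamma ((n:ℝ)-1) := h
    _ = Real.Gamma ((n:ℝ)-1) * φ^(n-1) := by
        rw [show (n:ℝ) - 1 = ((n - 1 : ℕ) : ℝ) by rw [Nat.cast_sub (by omega)]; push_cast; ring]
        rw [Real.rpow_natCast]
        ring

lemma aux_integrable_s7(n : ℕ) (φ : ℝ) (hφ : 0 < φ) :
    IntegrableOn (fun s : ℝ => Real.exp (-s/φ) * s^(n-2)) (Ioi 0) := by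
  have h := integrableOn_rpow_mul_exp_neg_mul_rpow (p := 1) (s := ((n-2 : ℕ):ℝ))
    (b := 1/φ) (lt_of_lt_of_le (by norm_num) (Nat.cast_nonneg _)) (by norm_num) (by positivity)
  apply h.congr_fun ?_ measurableSet_Ioi
  intro s hs
  simp only [Real.rpow_one, Real.rpow_natCast]
  rw [show -(1/φ) * s = -s/φ by ring]
  ring

/-- Tightness of the Lemma 5 bounds: as `x → ∞`,
`∫_x^∞ e^{-t/φ}(t-x)^{n-2}[t^{-(2nT-1)} - (t+a)^{-(2nT-1)}] dt
  ~ (2nT-1)·a·Γ(n-1) φ^{n-1} x^{-2nT} e^{-x/φ}`. -/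
theorem stmt_7 (nT n : ℕ) (hnT : 2 ≤ nT) (hn : 2 ≤ n) (φ a : ℝ) (hφ : 0 < φ) (ha : 0 < a) :
    Tendsto (fun x : ℝ =>
        (∫ t in Ioi x, Real.exp (-t / φ) * (t - x) ^ (n - 2) *
            ((t ^ (2 * nT - 1))⁻¹ - ((t + a) ^ (2 * nT - 1))⁻¹))
          / ((2 * (nT : ℝ) - 1) * a * Real.Gamma ((n : ℝ) - 1) * φ ^ (n - 1) *
              (x ^ (2 * nT))⁻¹ * Real.exp (-x / φ)))
      atTop (nhds 1) := by
  obtain ⟨p, hp⟩ : ∃ p, 2*nT - 1 = p + 1 := ⟨2*nT-2, by omega⟩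
  have hp2 : 2*nT = p + 2 := by omega
  have hpc : 2*(nT:ℝ)-1 = (p:ℝ)+1 := by
    have h := congrArg (Nat.cast : ℕ → ℝ) hp2
    push_cast at h; linarith
  have hn1 : (0:ℝ) < (n:ℝ) - 1 := by
    have : (2:ℝ) ≤ n := by exact_mod_cast hn
    linarith
  set G : ℝ := Real.Gamma ((n:ℝ)-1) * φ^(n-1) with hGdef
  have hGpos : 0 < G := mul_pos (Real.Gamma_pos_of_pos hn1) (pow_pos hφ _)
  set D : ℝ := ((p:ℝ)+1) * a * G with hDdef
  have hDpos : 0 < D := by positivity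
  set base : ℝ → ℝ := fun s => Real.exp (-s/φ) * s^(n-2) with hbasedef
  have hbase : IntegrableOn base (Ioi 0) := aux_integrable_s7 n φ hφ
  have hbase_eq : ∫ s in Ioi (0:ℝ), base s = G := aux_gamma n hn φ hφ
  -- the two comparison families
  set ψ : ℝ → ℝ → ℝ := fun x s =>
    (base s * (((s+x)^(p+1))⁻¹ - ((s+x+a)^(p+1))⁻¹)) * x^(p+2) with hψdef
  set F : ℝ → ℝ → ℝ := fun x s =>
    base s * (((p:ℝ)+1) * a * (x/(x+(s+a)))^(p+2)) with hFdef
  have hbase_nonneg : ∀ s : ℝ, 0 < s → 0 ≤ base s := fun s hs => by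
    simp only [hbasedef]; positivity
  -- pointwise bounds
  have hFψ : ∀ x : ℝ, 0 < x → ∀ s ∈ Ioi (0:ℝ), F x s ≤ ψ x s := by
    intro x hx s hs
    have hs' : (0:ℝ) < s := hs
    have hu : (0:ℝ) < s + x := by linarith
    have hlow := (aux_diff_bounds p hu ha).1
    simp only [hψdef, hFdef]
    have h1 : ((p:ℝ)+1) * a * (x/(x+(s+a)))^(p+2)
        ≤ (((s+x)^(p+1))⁻¹ - ((s+x+a)^(p+1))⁻¹) * x^(p+2) := by
      rw [div_pow]
      rw [show x+(s+a) = s+x+a by ring]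
      rw [mul_div_assoc']
      rw [div_le_iff₀ (by positivity)]
      calc ((p:ℝ)+1) * a * x^(p+2)
          = (((p:ℝ)+1) * a / (s+x+a)^(p+2)) * x^(p+2) * (s+x+a)^(p+2) := by
            field_simp
        _ ≤ ((((s+x)^(p+1))⁻¹ - ((s+x+a)^(p+1))⁻¹)) * x^(p+2) * (s+x+a)^(p+2) := by
            apply mul_le_mul_of_nonneg_right (mul_le_mul_of_nonneg_right hlow (by positivity)) (by positivity)
        _ = (((s+x)^(p+1))⁻¹ - ((s+x+a)^(p+1))⁻¹) * x^(p+2) * (s+x+a)^(p+2) := by ring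
    calc base s * (((p:ℝ)+1) * a * (x/(x+(s+a)))^(p+2))
        ≤ base s * ((((s+x)^(p+1))⁻¹ - ((s+x+a)^(p+1))⁻¹) * x^(p+2)) :=
          mul_le_mul_of_nonneg_left h1 (hbase_nonneg s hs')
      _ = (base s * (((s+x)^(p+1))⁻¹ - ((s+x+a)^(p+1))⁻¹)) * x^(p+2) := by ring
  have hψub : ∀ x : ℝ, 0 < x → ∀ s ∈ Ioi (0:ℝ), ψ x s ≤ base s * (((p:ℝ)+1) * a) := by
    intro x hx s hs
    have hs' : (0:ℝ) < s := hs
    have hu : (0:ℝ) < s + x := by linarith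
    have hup := (aux_diff_bounds p hu ha).2
    simp only [hψdef]
    have h1 : (((s+x)^(p+1))⁻¹ - ((s+x+a)^(p+1))⁻¹) * x^(p+2) ≤ ((p:ℝ)+1) * a := by
      calc (((s+x)^(p+1))⁻¹ - ((s+x+a)^(p+1))⁻¹) * x^(p+2)
          ≤ (((p:ℝ)+1) * a / (s+x)^(p+2)) * x^(p+2) :=
            mul_le_mul_of_nonneg_right hup (by positivity)
        _ ≤ (((p:ℝ)+1) * a / (s+x)^(p+2)) * (s+x)^(p+2) := by
            apply mul_le_mul_of_nonneg_left (pow_le_pow_left₀ hx.le (by linarith) _) (by positivity)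
        _ = ((p:ℝ)+1) * a := by field_simp
    calc (base s * (((s+x)^(p+1))⁻¹ - ((s+x+a)^(p+1))⁻¹)) * x^(p+2)
        = base s * ((((s+x)^(p+1))⁻¹ - ((s+x+a)^(p+1))⁻¹) * x^(p+2)) := by ring
      _ ≤ base s * (((p:ℝ)+1) * a) := mul_le_mul_of_nonneg_left h1 (hbase_nonneg s hs')
  have hFnonneg : ∀ x : ℝ, 0 < x → ∀ s ∈ Ioi (0:ℝ), 0 ≤ F x s := by
    intro x hx s hs
    have hs' : (0:ℝ) < s := hs
    simp only [hFdef, hbasedef]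
    positivity
  -- integrability of the families
  have hboundInt : IntegrableOn (fun s => base s * (((p:ℝ)+1) * a)) (Ioi 0) :=
    hbase.mul_const _
  have hmeasψ : ∀ x : ℝ, AEStronglyMeasurable (ψ x) (volume.restrict (Ioi 0)) := by
    intro x
    apply Measurable.aestronglyMeasurable
    simp only [hψdef, hbasedef]
    fun_prop
  have hmeasF : ∀ x : ℝ, AEStronglyMeasurable (F x) (volume.restrict (Ioi 0)) := by
    intro x
    apply Measurable.aestronglyMeasurable
    simp only [hFdef, hbasedef]
    fun_prop
  have hψint : ∀ x : ℝ, 0 < x → IntegrableOn (ψ x) (Ioi 0) := by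
    intro x hx
    apply hboundInt.mono' (hmeasψ x)
    filter_upwards [self_mem_ae_restrict measurableSet_Ioi] with s hs
    rw [Real.norm_eq_abs, abs_le]
    constructor
    · have := le_trans (hFnonneg x hx s hs) (hFψ x hx s hs)
      have h2 : 0 ≤ base s * (((p:ℝ)+1)*a) := by
        have := hbase_nonneg s hs; positivity
      linarith
    · exact hψub x hx s hs
  have hFint : ∀ x : ℝ, 0 < x → IntegrableOn (F x) (Ioi 0) := by
    intro x hx
    apply hboundInt.mono' (hmeasF x)
    filter_upwards [self_mem_ae_restrict measurableSet_Ioi] with s hs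
    rw [Real.norm_eq_abs, abs_of_nonneg (hFnonneg x hx s hs)]
    exact le_trans (hFψ x hx s hs) (hψub x hx s hs)
  -- the rewriting of the ratio
  have hmain : ∀ x : ℝ, 0 < x →
      (∫ t in Ioi x, Real.exp (-t / φ) * (t - x) ^ (n - 2) *
            ((t ^ (2 * nT - 1))⁻¹ - ((t + a) ^ (2 * nT - 1))⁻¹))
          / ((2 * (nT : ℝ) - 1) * a * Real.Gamma ((n : ℝ) - 1) * φ ^ (n - 1) *
              (x ^ (2 * nT))⁻¹ * Real.exp (-x / φ))
        = (∫ s in Ioi 0, ψ x s) / D := by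
    intro x hx
    have hnum : (∫ t in Ioi x, Real.exp (-t / φ) * (t - x) ^ (n - 2) *
            ((t ^ (2 * nT - 1))⁻¹ - ((t + a) ^ (2 * nT - 1))⁻¹))
        = Real.exp (-x/φ) *
          ∫ s in Ioi 0, base s * (((s+x)^(p+1))⁻¹ - ((s+x+a)^(p+1))⁻¹) := by
      rw [aux_shift x]
      rw [← integral_const_mul]
      apply setIntegral_congr_fun measurableSet_Ioi
      intro s hs
      simp only [hp, hbasedef]
      rw [show s + x - x = s by ring, show s + x + a = s + (x + a) by ring,
        show -(s+x)/φ = -x/φ + -s/φ by ring, Real.exp_add]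
      ring_nf
    have hψeq : (∫ s in Ioi 0, ψ x s)
        = (∫ s in Ioi 0, base s * (((s+x)^(p+1))⁻¹ - ((s+x+a)^(p+1))⁻¹)) * x^(p+2) := by
      simp only [hψdef]
      rw [integral_mul_const]
    rw [hnum, hψeq, hp2, hpc, hDdef, hGdef]
    have hexp : Real.exp (-x/φ) ≠ 0 := Real.exp_ne_zero _
    have hxne : x^(p+2) ≠ 0 := by positivity
    have hΓ : Real.Gamma ((n:ℝ)-1) ≠ 0 := ne_of_gt (Real.Gamma_pos_of_pos hn1)
    have hφn : φ^(n-1) ≠ 0 := by positivity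
    have hpa : ((p:ℝ)+1) ≠ 0 := by positivity
    field_simp
  -- DCT for the lower family
  have hlimint : (∫ s in Ioi (0:ℝ), base s * (((p:ℝ)+1) * a)) = G * (((p:ℝ)+1) * a) := by
    rw [integral_mul_const, hbase_eq]
  have hDCT : Tendsto (fun x => ∫ s in Ioi 0, F x s) atTop (𝓝 (G * (((p:ℝ)+1) * a))) := by
    rw [← hlimint]
    apply tendsto_integral_filter_of_dominated_convergence
      (bound := fun s => base s * (((p:ℝ)+1) * a))
    · exact Eventually.of_forall hmeasF
    · filter_upwards [eventually_gt_atTop (0:ℝ)] with x hx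
      filter_upwards [self_mem_ae_restrict measurableSet_Ioi] with s hs
      rw [Real.norm_eq_abs, abs_of_nonneg (hFnonneg x hx s hs)]
      exact le_trans (hFψ x hx s hs) (hψub x hx s hs)
    · exact hboundInt
    · filter_upwards [self_mem_ae_restrict measurableSet_Ioi] with s hs
      have hs' : (0:ℝ) < s := hs
      have hc : (0:ℝ) < s + a := by linarith
      have h1 : Tendsto (fun x:ℝ => x/(x+(s+a))) atTop (𝓝 1) := by
        have h0 : Tendsto (fun x:ℝ => 1 - (s+a)/(x+(s+a))) atTop (𝓝 (1-0)) :=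
          tendsto_const_nhds.sub (Tendsto.div_atTop tendsto_const_nhds
            (tendsto_atTop_add_const_right _ _ tendsto_id))
        rw [sub_zero] at h0
        apply h0.congr'
        filter_upwards [eventually_gt_atTop (0:ℝ)] with x hx
        have hxc : x + (s+a) ≠ 0 := by positivity
        field_simp
        ring
      have h3 : Tendsto (fun x:ℝ => base s * (((p:ℝ)+1)*a*(x/(x+(s+a)))^(p+2))) atTop
          (𝓝 (base s * (((p:ℝ)+1)*a*(1:ℝ)^(p+2)))) :=
        Tendsto.const_mul _ (Tendsto.const_mul _ (h1.pow (p+2)))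
      simp only [hFdef]
      simpa using h3
  -- the lower comparison tends to 1
  have hL : Tendsto (fun x => (∫ s in Ioi 0, F x s) / D) atTop (𝓝 1) := by
    have := hDCT.div_const D
    rw [show G * (((p:ℝ)+1)*a) / D = 1 by rw [hDdef]; field_simp] at this
    exact this
  -- squeeze
  apply tendsto_of_tendsto_of_tendsto_of_le_of_le' hL tendsto_const_nhds
  · filter_upwards [eventually_gt_atTop (0:ℝ)] with x hx
    rw [hmain x hx]
    gcongr ?_ / _
    exact setIntegral_mono_on (hFint x hx) (hψint x hx) measurableSet_Ioi (hFψ x hx)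
  · filter_upwards [eventually_gt_atTop (0:ℝ)] with x hx
    rw [hmain x hx]
    rw [show (1:ℝ) = (G * (((p:ℝ)+1)*a)) / D by rw [hDdef]; field_simp]
    gcongr
    rw [← hlimint]
    exact setIntegral_mono_on (hψint x hx) hboundInt measurableSet_Ioi (hψub x hx)
end

section
/- Let n_T ≥ 2 and n ≥ 1 be integers and let c > 0, φ > 0, x ∈ ℝ. For K large enough that log(cK/φ^{n_T−1}) > 1, define b_K = φ log(cK/φ^{n_T−1}) − φ(n_T + n − 2) log log(cK/φ^{n_T−1}). Then lim_{K→∞} c φ^{n−1} K · exp(−(φx + b_K)/φ) / (φx + b_K)^{n_T+n−2} = e^{−x}. -/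
open Filter

/-- Limit computation (equation (64), Appendix E): with
`b_K = φ log(cK/φ^{nT-1}) - φ(nT+n-2) log log(cK/φ^{nT-1})`,
`c φ^{n-1} K exp(-(φx+b_K)/φ)/(φx+b_K)^{nT+n-2} → e^{-x}` as `K → ∞`. -/
theorem stmt_8 (nT n : ℕ) (hnT : 2 ≤ nT) (hn : 1 ≤ n) (c φ : ℝ) (hc : 0 < c) (hφ : 0 < φ)
    (x : ℝ) (b : ℕ → ℝ)
    (hb : ∀ K : ℕ, b K = φ * Real.log (c * K / φ ^ (nT - 1)) -
      φ * ((nT : ℝ) + (n : ℝ) - 2) * Real.log (Real.log (c * K / φ ^ (nT - 1)))) :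
    Tendsto (fun K : ℕ =>
        c * φ ^ (n - 1) * (K : ℝ) * Real.exp (-(φ * x + b K) / φ)
          / (φ * x + b K) ^ (nT + n - 2))
      atTop (nhds (Real.exp (-x))) := by
  have hφ' : (φ : ℝ) ≠ 0 := ne_of_gt hφ
  set m : ℕ := nT + n - 2 with hm
  have hmr : ((nT : ℝ) + (n : ℝ) - 2) = (m : ℝ) := by
    have h : m + 2 = nT + n := by omega
    have := congrArg (Nat.cast : ℕ → ℝ) h
    push_cast at this
    linarith
  set L : ℕ → ℝ := fun K => Real.log (c * K / φ ^ (nT - 1)) with hLdef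
  have hL : Tendsto L atTop atTop := by
    apply Real.tendsto_log_atTop.comp
    apply Tendsto.atTop_div_const (pow_pos hφ _)
    exact (tendsto_natCast_atTop_atTop).const_mul_atTop hc
  have hinner : Tendsto (fun K => (x + L K - m * Real.log (L K)) / L K) atTop (nhds 1) := by
    have h1 : Tendsto (fun K => x / L K) atTop (nhds 0) := by
      simpa [div_eq_mul_inv] using ((tendsto_inv_atTop_zero.comp hL).const_mul x)
    have h2 : Tendsto (fun K => Real.log (L K) / L K) atTop (nhds 0) :=
      (Real.isLittleO_log_id_atTop.tendsto_div_nhds_zero).comp hL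
    have h3 : Tendsto (fun K => x / L K + 1 - m * (Real.log (L K) / L K)) atTop
        (nhds (0 + 1 - m * 0)) := (h1.add tendsto_const_nhds).sub (h2.const_mul (m:ℝ))
    rw [show (0:ℝ) + 1 - m * 0 = 1 by ring] at h3
    apply h3.congr'
    filter_upwards [hL.eventually_gt_atTop 0] with K hK
    field_simp
  have hr : Tendsto (fun K => L K / (x + L K - m * Real.log (L K))) atTop (nhds 1) := by
    have := hinner.inv₀ one_ne_zero
    simpa [inv_div] using this
  have hmain : Tendsto (fun K => Real.exp (-x) *
      (L K / (x + L K - m * Real.log (L K))) ^ m) atTop (nhds (Real.exp (-x))) := by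
    simpa using (hr.pow m).const_mul (Real.exp (-x))
  apply hmain.congr'
  filter_upwards [hL.eventually_ge_atTop 1,
    hinner.eventually (eventually_gt_nhds (show (1:ℝ)/2 < 1 by norm_num)),
    eventually_ge_atTop 1] with K hK1 hK2 hK3
  have hLpos : 0 < L K := lt_of_lt_of_le one_pos hK1
  have hD : 0 < x + L K - m * Real.log (L K) := by
    have := (div_pos_iff.mp (lt_trans one_half_pos hK2))
    rcases this with ⟨h, _⟩ | ⟨_, h⟩
    · exact h
    · linarith
  have hKpos : (0:ℝ) < (K : ℝ) := by exact_mod_cast hK3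
  have ht : (0:ℝ) < c * K / φ ^ (nT - 1) := by positivity
  -- rewrite b K
  have hbK : φ * x + b K = φ * (x + L K - m * Real.log (L K)) := by
    rw [hb K, hmr]; ring
  have hexp : Real.exp (-(φ * x + b K) / φ)
      = Real.exp (-x) * (c * K / φ ^ (nT - 1))⁻¹ * (L K) ^ m := by
    rw [hbK, neg_div, mul_div_cancel_left₀ _ hφ']
    have hexpL : Real.exp (-(L K)) = (c * K / φ ^ (nT - 1))⁻¹ := by
      rw [Real.exp_neg]; congr 1; exact Real.exp_log ht
    rw [show -(x + L K - m * Real.log (L K)) = -x + -(L K) + m * Real.log (L K) by ring,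
      Real.exp_add, Real.exp_add, hexpL, Real.exp_nat_mul, Real.exp_log hLpos]
  rw [hexp, hbK, mul_pow, div_pow]
  have hpow : φ ^ (n - 1) * φ ^ (nT - 1) = φ ^ m := by
    rw [← pow_add]; congr 1; omega
  field_simp
  ring_nf
  rw [← hpow]
end

section
/- Let m ≥ 1 be an integer and C > 0, φ > 0 real. Let F be the cumulative distribution function of a real random variable and suppose there exist constants C_0 > 0 and x_0 > 0 such that |1 − F(x) − C x^{−m} e^{−x/φ}| ≤ C_0 x^{−m−1} e^{−x/φ} for all x ≥ x_0. For each K ≥ 2 let X_1, …, X_K be i.i.d. with c.d.f. F and M_K = max_{1≤k≤K} X_k, and define χ_K = φ log(CK/φ^m) − φ m log log(CK/φ^m) (for K large enough that log(CK/φ^m) > 1). Then there exist constants C_1 > 0 and K_0 such that for all K ≥ K_0, P( χ_K − φ log log √K ≤ M_K ≤ χ_K + φ log log √K ) ≥ 1 − C_1 / log K. -/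
open MeasureTheory ProbabilityTheory
open Filter Asymptotics

lemma aux_prod {K : ℕ} (hK : 0 < K) {Ω : Type} [MeasurableSpace Ω] (μ : Measure Ω)
    [IsProbabilityMeasure μ] (X : Fin K → Ω → ℝ)
    (hind : iIndepFun X μ)
    (F : ℝ → ℝ) (hF : ∀ i x, (μ {ω | X i ω ≤ x}).toReal = F x) (x : ℝ) :
    μ {ω | (⨆ i, X i ω) ≤ x} = ENNReal.ofReal (F x ^ K) := by
  haveI : Nonempty (Fin K) := ⟨⟨0, hK⟩⟩
  have hFx0 : 0 ≤ F x := by rw [← hF ⟨0, hK⟩ x]; exact ENNReal.toReal_nonneg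
  have hset : {ω | (⨆ i, X i ω) ≤ x} = ⋂ i, X i ⁻¹' Set.Iic x := by
    ext ω
    simp only [Set.mem_setOf_eq, Set.mem_iInter, Set.mem_preimage, Set.mem_Iic]
    exact ciSup_le_iff (Set.Finite.bddAbove (Set.finite_range _))
  have hmu : ∀ i : Fin K, μ (X i ⁻¹' Set.Iic x) = ENNReal.ofReal (F x) := by
    intro i
    have : (μ (X i ⁻¹' Set.Iic x)).toReal = F x := hF i x
    rw [← this]
    exact (ENNReal.ofReal_toReal (measure_ne_top μ _)).symm
  have hprod := hind.measure_inter_preimage_eq_mul (S := Finset.univ)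
    (sets := fun _ => Set.Iic x) (fun i _ => measurableSet_Iic)
  simp only [Set.mem_univ, Set.iInter_true, Finset.mem_univ, Set.iInter_iInter_eq_left] at hprod
  rw [hset]
  rw [hprod]
  simp only [hmu]
  rw [Finset.prod_const, ← ENNReal.ofReal_pow hFx0]
  simp

set_option maxHeartbeats 1000000 in
lemma aux_anal (m : ℕ) (C φ : ℝ) (hC : 0 < C) (hφ : 0 < φ)
    (F : ℝ → ℝ) (hF0 : ∀ x, 0 ≤ F x) (hF1 : ∀ x, F x ≤ 1)
    (C₀ x₀ : ℝ) (hC₀ : 0 < C₀) (hx₀ : 0 < x₀)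
    (htail : ∀ x : ℝ, x₀ ≤ x →
      |1 - F x - C / x ^ m * Real.exp (-x / φ)| ≤ C₀ / x ^ (m + 1) * Real.exp (-x / φ))
    (χ : ℕ → ℝ)
    (hχ : ∀ K : ℕ, χ K = φ * Real.log (C * K / φ ^ m)
      - φ * (m : ℝ) * Real.log (Real.log (C * K / φ ^ m))) :
    ∀ᶠ K : ℕ in atTop, 3 ≤ K ∧ 1 ≤ Real.log K ∧
      F (χ K - φ * Real.log (Real.log (Real.sqrt K))) ^ K
        + (1 - F (χ K + φ * Real.log (Real.log (Real.sqrt K))) ^ K)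
        ≤ (4 + (C + C₀) * 2 ^ (m + 1) / C) / Real.log K := by
  have hφm : (0:ℝ) < C / φ ^ m := by positivity
  set c : ℝ := Real.log (C / φ ^ m) with hc
  -- basic tendstos
  have hlog : Tendsto (fun K : ℕ => Real.log K) atTop atTop :=
    Real.tendsto_log_atTop.comp tendsto_natCast_atTop_atTop
  have hLfun : Tendsto (fun K : ℕ => Real.log (C * K / φ ^ m)) atTop atTop := by
    have h1 : Tendsto (fun K : ℕ => C / φ ^ m * (K : ℝ)) atTop atTop :=
      tendsto_natCast_atTop_atTop.const_mul_atTop hφm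
    have h2 := Real.tendsto_log_atTop.comp h1
    refine h2.congr (fun K => ?_)
    simp only [Function.comp]
    ring_nf
  -- eventual facts
  have ev1 : ∀ᶠ K : ℕ in atTop, 3 ≤ K := eventually_ge_atTop 3
  have ev2 : ∀ᶠ K : ℕ in atTop, 2 ≤ Real.log K := hlog.eventually_ge_atTop 2
  have hlo : ∀ᶠ y : ℝ in atTop, (m : ℝ) * Real.log y ≤ y / 2 := by
    have h := (Real.isLittleO_log_id_atTop.const_mul_left (m : ℝ)).def
      (by norm_num : (0:ℝ) < 1/2)
    filter_upwards [h, eventually_ge_atTop (0:ℝ)] with y hy hy0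
    simp only [Real.norm_eq_abs] at hy
    have : |(m : ℝ) * Real.log y| ≤ 1/2 * |y| := hy
    calc (m : ℝ) * Real.log y ≤ |(m : ℝ) * Real.log y| := le_abs_self _
      _ ≤ 1/2 * |y| := this
      _ = y / 2 := by rw [abs_of_nonneg hy0]; ring
  have ev3 : ∀ᶠ K : ℕ in atTop, 1 ≤ Real.log (C * K / φ ^ m) := hLfun.eventually_ge_atTop 1
  have ev4 : ∀ᶠ K : ℕ in atTop,
      (m : ℝ) * Real.log (Real.log (C * K / φ ^ m)) ≤ Real.log (C * K / φ ^ m) / 2 :=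
    hLfun.eventually hlo
  have ev5 : ∀ᶠ K : ℕ in atTop, 2 * max x₀ 1 / φ ≤ Real.log (C * K / φ ^ m) :=
    hLfun.eventually_ge_atTop _
  -- tendsto of a K
  have haeq : ∀ᶠ K : ℕ in atTop,
      χ K - φ * Real.log (Real.log (Real.sqrt K))
        = φ * ((c + Real.log K) - (m : ℝ) * Real.log (c + Real.log K)
            - Real.log (Real.log K / 2)) := by
    filter_upwards [eventually_ge_atTop 1] with K hK
    have hKpos : (0:ℝ) < K := by exact_mod_cast hK
    have hLsum : Real.log (C * K / φ ^ m) = c + Real.log K := by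
      rw [show C * K / φ ^ m = C / φ ^ m * K by ring,
        Real.log_mul (ne_of_gt hφm) (ne_of_gt hKpos)]
    have hs : Real.log (Real.sqrt K) = Real.log K / 2 := Real.log_sqrt hKpos.le
    rw [hχ K, hLsum, hs]; ring
  have hg : Tendsto (fun y : ℝ => φ * ((c + y) - (m : ℝ) * Real.log (c + y)
      - Real.log (y / 2))) atTop atTop := by
    apply Tendsto.const_mul_atTop hφ
    have o1 : (fun y : ℝ => Real.log (c + y)) =o[atTop] (fun y : ℝ => y) := by
      have t : Tendsto (fun y : ℝ => c + y) atTop atTop :=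
        tendsto_atTop_add_const_left _ c tendsto_id
      have h1 := Real.isLittleO_log_id_atTop.comp_tendsto t
      have hO : (fun y : ℝ => c + y) =O[atTop] (fun y : ℝ => y) := by
        refine IsBigO.of_bound 2 ?_
        filter_upwards [eventually_ge_atTop (|c|)] with y hy
        have hy0 : 0 ≤ y := le_trans (abs_nonneg c) hy
        have : |c + y| ≤ |c| + |y| := abs_add_le _ _
        rw [Real.norm_eq_abs, Real.norm_eq_abs]
        rw [abs_of_nonneg hy0] at *
        linarith [this]
      exact h1.trans_isBigO hO
    have o2 : (fun y : ℝ => Real.log y) =o[atTop] (fun y : ℝ => y) :=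
      Real.isLittleO_log_id_atTop
    have o3 : (fun y : ℝ => (m : ℝ) * Real.log (c + y) + Real.log y)
        =o[atTop] (fun y : ℝ => y) := (o1.const_mul_left (m : ℝ)).add o2
    have h4 := o3.def (by norm_num : (0:ℝ) < 1/2)
    apply tendsto_atTop_mono' atTop
      (show (fun y : ℝ => y / 2 + (c + Real.log 2)) ≤ᶠ[atTop]
        (fun y : ℝ => (c + y) - (m : ℝ) * Real.log (c + y) - Real.log (y / 2)) from ?_)
      (tendsto_atTop_add_const_right _ _ (tendsto_id.atTop_div_const (by norm_num)))
    filter_upwards [h4, eventually_gt_atTop (0:ℝ)] with y hy hy0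
    simp only [Real.norm_eq_abs] at hy
    have habs : |(m : ℝ) * Real.log (c + y) + Real.log y| ≤ 1/2 * |y| := hy
    have h5 : (m : ℝ) * Real.log (c + y) + Real.log y ≤ y / 2 := by
      calc (m : ℝ) * Real.log (c + y) + Real.log y
          ≤ |(m : ℝ) * Real.log (c + y) + Real.log y| := le_abs_self _
        _ ≤ 1/2 * |y| := habs
        _ = y / 2 := by rw [abs_of_nonneg hy0.le]; ring
    have h6 : Real.log (y / 2) = Real.log y - Real.log 2 :=
      Real.log_div (ne_of_gt hy0) (by norm_num)
    rw [h6]; linarith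
  have ev6 : ∀ᶠ K : ℕ in atTop,
      max x₀ (max 1 (2 * C₀ / C)) ≤ χ K - φ * Real.log (Real.log (Real.sqrt K)) := by
    filter_upwards [haeq, (hg.comp hlog).eventually_ge_atTop (max x₀ (max 1 (2 * C₀ / C)))]
      with K h1 h2
    rw [h1]; exact h2
  filter_upwards [ev1, ev2, ev3, ev4, ev5, ev6] with K hK3 hx2 hL1 hmL hL5 ha6
  refine ⟨hK3, by linarith, ?_⟩
  set x := Real.log (K:ℝ) with hxdef
  have hKpos : (0:ℝ) < K := by exact_mod_cast Nat.lt_of_lt_of_le (by norm_num) hK3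
  have hK0 : (K:ℝ) ≠ 0 := ne_of_gt hKpos
  set L := Real.log (C * K / φ ^ m) with hLdef
  have hs : Real.log (Real.sqrt (K:ℝ)) = x / 2 := Real.log_sqrt hKpos.le
  set l := Real.log (Real.log (Real.sqrt (K:ℝ))) with hldef
  have hl : l = Real.log (x / 2) := by rw [hldef, hs]
  have hl0 : 0 ≤ l := by rw [hl]; exact Real.log_nonneg (by linarith)
  have hlogL0 : 0 ≤ Real.log L := Real.log_nonneg hL1
  have hCK : 0 < C * K / φ ^ m := by positivity
  have hLpos : (0:ℝ) < L := by linarith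
  have hχK : χ K = φ * L - φ * m * Real.log L := hχ K
  set a := χ K - φ * l with hadef
  set b := χ K + φ * l with hbdef
  have hml : φ * (m:ℝ) * Real.log L ≤ φ * L / 2 := by
    have h := mul_le_mul_of_nonneg_left hmL hφ.le
    calc φ * (m:ℝ) * Real.log L = φ * ((m:ℝ) * Real.log L) := by ring
      _ ≤ φ * (L / 2) := h
      _ = φ * L / 2 := by ring
  have hχub : χ K ≤ φ * L := by
    rw [hχK]
    linarith [mul_nonneg (mul_nonneg hφ.le (Nat.cast_nonneg m)) hlogL0]
  have hχlb : φ * L / 2 ≤ χ K := by rw [hχK]; linarith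
  have hφl : 0 ≤ φ * l := mul_nonneg hφ.le hl0
  have ha_ub : a ≤ φ * L := by rw [hadef]; linarith
  have hb_lb : φ * L / 2 ≤ b := by rw [hbdef]; linarith
  have ha_x0 : x₀ ≤ a := le_trans (le_max_left _ _) ha6
  have ha1 : (1:ℝ) ≤ a := le_trans (le_trans (le_max_left _ _) (le_max_right _ _)) ha6
  have ha2 : 2 * C₀ / C ≤ a := le_trans (le_trans (le_max_right _ _) (le_max_right _ _)) ha6
  have ha_pos : (0:ℝ) < a := by linarith
  have hφL : max x₀ 1 ≤ φ * L / 2 := by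
    have h := mul_le_mul_of_nonneg_left hL5 hφ.le
    have h2 : φ * (2 * max x₀ 1 / φ) = 2 * max x₀ 1 := by field_simp
    rw [h2] at h; linarith
  have hb_x0 : x₀ ≤ b := le_trans (le_trans (le_max_left _ _) hφL) hb_lb
  have hb1 : (1:ℝ) ≤ b := le_trans (le_trans (le_max_right _ _) hφL) hb_lb
  have hb_pos : (0:ℝ) < b := by linarith
  -- exponential identities
  have hexpχ : Real.exp (-(χ K) / φ) = φ ^ m * L ^ m / (C * K) := by
    have h1 : -(χ K) / φ = -L + (m:ℝ) * Real.log L := by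
      rw [hχK]; field_simp; ring
    rw [h1, Real.exp_add, Real.exp_neg, Real.exp_log hCK, Real.exp_nat_mul,
      Real.exp_log hLpos]
    field_simp
  have hx_pos : (0:ℝ) < x := by linarith
  have hexpb : Real.exp (-b / φ) = φ ^ m * L ^ m / (C * K) * (2 / x) := by
    have h1 : -b / φ = -(χ K) / φ + -l := by rw [hbdef]; field_simp; ring
    rw [h1, Real.exp_add, hexpχ, hl, Real.exp_neg,
      Real.exp_log (by linarith : (0:ℝ) < x / 2)]
    rw [show (x / 2)⁻¹ = 2 / x by field_simp]
  have hexpa : Real.exp (-a / φ) = φ ^ m * L ^ m / (C * K) * (x / 2) := by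
    have h1 : -a / φ = -(χ K) / φ + l := by rw [hadef]; field_simp; ring
    rw [h1, Real.exp_add, hexpχ, hl, Real.exp_log (by linarith : (0:ℝ) < x / 2)]
  have hφLm : (0:ℝ) < φ ^ m * L ^ m := by positivity
  -- upper tail at b
  have htb := abs_le.mp (htail b hb_x0)
  have hexpb_pos := Real.exp_pos (-b / φ)
  have hbm_pos : (0:ℝ) < b ^ m := pow_pos hb_pos m
  have h3 : C₀ / b ^ (m + 1) ≤ C₀ / b ^ m := by
    gcongr
    · exact Nat.le_succ m
  have h1b : 1 - F b ≤ (C + C₀) / b ^ m * Real.exp (-b / φ) := by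
    have h4 : C₀ / b ^ (m+1) * Real.exp (-b / φ) ≤ C₀ / b ^ m * Real.exp (-b / φ) :=
      mul_le_mul_of_nonneg_right h3 hexpb_pos.le
    have h5 : (C + C₀) / b ^ m * Real.exp (-b / φ)
        = C / b ^ m * Real.exp (-b / φ) + C₀ / b ^ m * Real.exp (-b / φ) := by
      rw [add_div]; ring
    linarith [htb.2]
  have hbm : (φ * L / 2) ^ m ≤ b ^ m := pow_le_pow_left₀ (by positivity) hb_lb m
  have hub : 1 - F b ≤ (C + C₀) * 2 ^ (m + 1) / C / ((K:ℝ) * x) := by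
    have h6 : (C + C₀) / b ^ m ≤ (C + C₀) / (φ * L / 2) ^ m := by
      gcongr
      all_goals first | exact hbm | positivity | linarith
    have h7 : 1 - F b ≤ (C + C₀) / (φ * L / 2) ^ m * Real.exp (-b / φ) := by
      calc 1 - F b ≤ (C + C₀) / b ^ m * Real.exp (-b / φ) := h1b
        _ ≤ (C + C₀) / (φ * L / 2) ^ m * Real.exp (-b / φ) :=
          mul_le_mul_of_nonneg_right h6 hexpb_pos.le
    have h8 : (C + C₀) / (φ * L / 2) ^ m * Real.exp (-b / φ)
        = (C + C₀) * 2 ^ (m + 1) / C / ((K:ℝ) * x) := by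
      rw [hexpb]
      rw [show φ * L / 2 = φ * L / 2 from rfl]
      rw [div_pow, mul_pow]
      field_simp
      ring
    linarith
  -- Bernoulli at b
  have hbern : 1 - F b ^ K ≤ (K:ℝ) * (1 - F b) := by
    have h := one_add_mul_le_pow (by linarith [hF0 b] : (-2:ℝ) ≤ F b - 1) K
    have h2 : (1 + (F b - 1)) = F b := by ring
    rw [h2] at h; linarith
  have hpart2 : 1 - F b ^ K ≤ (C + C₀) * 2 ^ (m + 1) / C / x := by
    have h9 : (K:ℝ) * (1 - F b) ≤ (K:ℝ) * ((C + C₀) * 2 ^ (m + 1) / C / ((K:ℝ) * x)) :=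
      mul_le_mul_of_nonneg_left hub (Nat.cast_nonneg K)
    have h10 : (K:ℝ) * ((C + C₀) * 2 ^ (m + 1) / C / ((K:ℝ) * x))
        = (C + C₀) * 2 ^ (m + 1) / C / x := by field_simp
    linarith
  -- lower tail at a
  have hta := abs_le.mp (htail a ha_x0)
  have hexpa_pos := Real.exp_pos (-a / φ)
  have ham_pos : (0:ℝ) < a ^ m := pow_pos ha_pos m
  have hCa : C₀ / a ≤ C / 2 := by
    rw [div_le_div_iff₀ ha_pos two_pos]
    have h := mul_le_mul_of_nonneg_left ha2 hC.le
    have h2 : C * (2 * C₀ / C) = 2 * C₀ := by field_simp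
    rw [h2] at h; linarith
  have h3a : C₀ / a ^ (m + 1) ≤ C / 2 / a ^ m := by
    have heq : C₀ / a ^ (m + 1) = (C₀ / a) / a ^ m := by
      rw [div_div, ← pow_succ']
    rw [heq]
    exact div_le_div_of_nonneg_right hCa ham_pos.le
  have h1a : C / (2 * a ^ m) * Real.exp (-a / φ) ≤ 1 - F a := by
    have h4 : C₀ / a ^ (m + 1) * Real.exp (-a / φ) ≤ C / 2 / a ^ m * Real.exp (-a / φ) :=
      mul_le_mul_of_nonneg_right h3a hexpa_pos.le
    have h5 : C / a ^ m * Real.exp (-a / φ) - C / 2 / a ^ m * Real.exp (-a / φ)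
        = C / (2 * a ^ m) * Real.exp (-a / φ) := by
      field_simp; ring
    linarith [hta.1]
  have ham : a ^ m ≤ φ ^ m * L ^ m := by
    rw [← mul_pow]; exact pow_le_pow_left₀ ha_pos.le ha_ub m
  have hla : x / (4 * (K:ℝ)) ≤ 1 - F a := by
    have h2 : C / (2 * (φ ^ m * L ^ m)) ≤ C / (2 * a ^ m) := by gcongr
    calc x / (4 * (K:ℝ))
        = C / (2 * (φ ^ m * L ^ m)) * (φ ^ m * L ^ m / (C * K) * (x / 2)) := by
          field_simp; ring
      _ = C / (2 * (φ ^ m * L ^ m)) * Real.exp (-a / φ) := by rw [hexpa]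
      _ ≤ C / (2 * a ^ m) * Real.exp (-a / φ) :=
          mul_le_mul_of_nonneg_right h2 hexpa_pos.le
      _ ≤ 1 - F a := h1a
  have hFa : F a ≤ Real.exp (-(x / (4 * (K:ℝ)))) := by
    have h := Real.add_one_le_exp (-(x / (4 * (K:ℝ))))
    linarith
  have hpow : F a ^ K ≤ Real.exp (-(x / 4)) := by
    calc F a ^ K ≤ Real.exp (-(x / (4 * (K:ℝ)))) ^ K := pow_le_pow_left₀ (hF0 a) hFa K
      _ = Real.exp ((K:ℝ) * (-(x / (4 * (K:ℝ))))) := (Real.exp_nat_mul _ K).symm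
      _ = Real.exp (-(x / 4)) := by congr 1; field_simp
  have hpart1 : F a ^ K ≤ 4 / x := by
    have h1 : x ≤ 4 * Real.exp (x / 4) := by
      have h := Real.add_one_le_exp (x / 4); linarith
    have h2 : Real.exp (-(x / 4)) ≤ 4 / x := by
      rw [Real.exp_neg, inv_eq_one_div,
        div_le_div_iff₀ (Real.exp_pos _) hx_pos]
      linarith
    linarith
  have hsum : F a ^ K + (1 - F b ^ K) ≤ 4 / x + (C + C₀) * 2 ^ (m + 1) / C / x :=
    add_le_add hpart1 hpart2
  have hfin : 4 / x + (C + C₀) * 2 ^ (m + 1) / C / x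
      = (4 + (C + C₀) * 2 ^ (m + 1) / C) / x := by rw [add_div]
  linarith


/-- Lemma 6 in its general form: the maximum `M_K` of `K` i.i.d. random variables whose
common c.d.f. `F` has tail `1 - F(x) = C x^{-m} e^{-x/φ}(1 + O(1/x))` concentrates in an
interval of half-width `φ log log √K` around
`χ_K = φ log(CK/φ^m) - φ m log log(CK/φ^m)` with probability `≥ 1 - O(1/log K)`. -/
theorem stmt_9 (m : ℕ) (hm : 1 ≤ m) (C φ : ℝ) (hC : 0 < C) (hφ : 0 < φ)
    (F : ℝ → ℝ)
    (hcdf : ∃ ν : Measure ℝ, IsProbabilityMeasure ν ∧ ∀ x, (ν (Set.Iic x)).toReal = F x)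
    (C₀ x₀ : ℝ) (hC₀ : 0 < C₀) (hx₀ : 0 < x₀)
    (htail : ∀ x : ℝ, x₀ ≤ x →
      |1 - F x - C / x ^ m * Real.exp (-x / φ)| ≤ C₀ / x ^ (m + 1) * Real.exp (-x / φ))
    (χ : ℕ → ℝ)
    (hχ : ∀ K : ℕ, χ K = φ * Real.log (C * K / φ ^ m)
      - φ * (m : ℝ) * Real.log (Real.log (C * K / φ ^ m))) :
    ∃ C₁ > (0:ℝ), ∃ K₀ : ℕ, ∀ K : ℕ, K₀ ≤ K →
      ∀ (Ω : Type) [MeasurableSpace Ω] (μ : Measure Ω) [IsProbabilityMeasure μ],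
        ∀ X : Fin K → Ω → ℝ, (∀ i, Measurable (X i)) →
          iIndepFun X μ →
          (∀ i x, (μ {ω | X i ω ≤ x}).toReal = F x) →
          1 - ENNReal.ofReal (C₁ / Real.log K) ≤
            μ {ω | χ K - φ * Real.log (Real.log (Real.sqrt K)) ≤ (⨆ i, X i ω) ∧
                   (⨆ i, X i ω) ≤ χ K + φ * Real.log (Real.log (Real.sqrt K))} := by
  obtain ⟨ν, hν, hνF⟩ := hcdf
  haveI := hν
  have hF0 : ∀ x, 0 ≤ F x := fun x => by rw [← hνF x]; exact ENNReal.toReal_nonneg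
  have hF1 : ∀ x, F x ≤ 1 := fun x => by
    rw [← hνF x]
    have h := ENNReal.toReal_mono (by simp) (prob_le_one (μ := ν) (s := Set.Iic x))
    simpa using h
  have hC₁pos : (0:ℝ) < 4 + (C + C₀) * 2 ^ (m + 1) / C := by positivity
  have key := aux_anal m C φ hC hφ F hF0 hF1 C₀ x₀ hC₀ hx₀ htail χ hχ
  obtain ⟨K₀, hK₀⟩ := Filter.eventually_atTop.mp key
  refine ⟨4 + (C + C₀) * 2 ^ (m + 1) / C, hC₁pos, K₀, ?_⟩
  intro K hK Ω _ μ _ X hmeas hind hX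
  obtain ⟨hK3, hlogK1, hineq⟩ := hK₀ K hK
  have hKpos : 0 < K := by omega
  set aa := χ K - φ * Real.log (Real.log (Real.sqrt (K:ℝ))) with ha
  set bb := χ K + φ * Real.log (Real.log (Real.sqrt (K:ℝ))) with hb
  have hMle : ∀ x : ℝ, μ {ω | (⨆ i, X i ω) ≤ x} = ENNReal.ofReal (F x ^ K) :=
    fun x => aux_prod hKpos μ X hind F hX x
  set B := {ω | (⨆ i, X i ω) ≤ bb} with hBdef
  set A := {ω | (⨆ i, X i ω) ≤ aa} with hAdef
  have hsub : B \ A ⊆ {ω | aa ≤ (⨆ i, X i ω) ∧ (⨆ i, X i ω) ≤ bb} := by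
    rintro ω ⟨h1, h2⟩
    exact ⟨(not_le.mp h2).le, h1⟩
  have hBle : μ B ≤ μ (B \ A) + μ A :=
    le_trans (measure_mono (Set.subset_diff_union B A)) (measure_union_le _ _)
  rw [hMle aa] at hBle
  rw [hMle bb] at hBle
  have hE : ENNReal.ofReal (F bb ^ K) - ENNReal.ofReal (F aa ^ K)
      ≤ μ {ω | aa ≤ (⨆ i, X i ω) ∧ (⨆ i, X i ω) ≤ bb} :=
    le_trans (tsub_le_iff_right.mpr hBle) (measure_mono hsub)
  have hlogpos : (0:ℝ) < Real.log K := by linarith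
  have hreal : 1 - (4 + (C + C₀) * 2 ^ (m + 1) / C) / Real.log K ≤ F bb ^ K - F aa ^ K := by
    linarith
  calc 1 - ENNReal.ofReal ((4 + (C + C₀) * 2 ^ (m + 1) / C) / Real.log K)
      = ENNReal.ofReal 1 - ENNReal.ofReal ((4 + (C + C₀) * 2 ^ (m + 1) / C) / Real.log K) := by
        rw [ENNReal.ofReal_one]
    _ = ENNReal.ofReal (1 - (4 + (C + C₀) * 2 ^ (m + 1) / C) / Real.log K) :=
        (ENNReal.ofReal_sub 1 (div_nonneg hC₁pos.le hlogpos.le)).symm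
    _ ≤ ENNReal.ofReal (F bb ^ K - F aa ^ K) := ENNReal.ofReal_le_ofReal hreal
    _ = ENNReal.ofReal (F bb ^ K) - ENNReal.ofReal (F aa ^ K) :=
        ENNReal.ofReal_sub _ (pow_nonneg (hF0 aa) K)
    _ ≤ _ := hE
end

section
/- Let n_T ≥ 2 be an integer and B ≥ 0 a real number, and let F be the cumulative distribution function given by F(x) = 1 − 2^B (1 + x)^{−(n_T−1)} for x ≥ 2^{B/(n_T−1)} − 1 and F(x) = 0 otherwise. For each K ≥ 2 let X_1, …, X_K be i.i.d. real random variables with c.d.f. F and M_K = max_{1≤k≤K} X_k. Then there exist constants C > 0 and K_0 such that for all K ≥ K_0, P( (2^B K / log √K)^{1/(n_T−1)} − 1 ≤ M_K ≤ (2^B K log √K)^{1/(n_T−1)} − 1 ) ≥ 1 − C / log K. -/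
open MeasureTheory ProbabilityTheory

set_option maxHeartbeats 1000000 in
/-- First part of Lemma 9 (equation (46)): for i.i.d. random variables with c.d.f.
`F(x) = 1 - 2^B (1+x)^{-(nT-1)}` for `x ≥ 2^{B/(nT-1)} - 1` (and `0` otherwise), the
maximum `M_K` satisfies
`P((2^B K/log √K)^{1/(nT-1)} - 1 ≤ M_K ≤ (2^B K log √K)^{1/(nT-1)} - 1) ≥ 1 - O(1/log K)`. -/
theorem stmt_10 (nT : ℕ) (hnT : 2 ≤ nT) (B : ℝ) (hB : 0 ≤ B)
    (F : ℝ → ℝ)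
    (hF : ∀ x : ℝ, F x = if (2:ℝ) ^ (B / ((nT : ℝ) - 1)) - 1 ≤ x
      then 1 - (2:ℝ) ^ B * ((1 + x) ^ (nT - 1))⁻¹ else 0) :
    ∃ C > (0:ℝ), ∃ K₀ : ℕ, ∀ K : ℕ, K₀ ≤ K →
      ∀ (Ω : Type) [MeasurableSpace Ω] (μ : Measure Ω) [IsProbabilityMeasure μ],
        ∀ X : Fin K → Ω → ℝ, (∀ i, Measurable (X i)) →
          iIndepFun X μ →
          (∀ i x, (μ {ω | X i ω ≤ x}).toReal = F x) →
          1 - ENNReal.ofReal (C / Real.log K) ≤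
            μ {ω | ((2:ℝ) ^ B * K / Real.log (Real.sqrt K)) ^ (1 / ((nT : ℝ) - 1)) - 1
                      ≤ (⨆ i, X i ω) ∧
                   (⨆ i, X i ω)
                      ≤ ((2:ℝ) ^ B * K * Real.log (Real.sqrt K)) ^ (1 / ((nT : ℝ) - 1)) - 1} := by
  refine ⟨3, by norm_num, 256, ?_⟩
  intro K hK Ω _ μ _ X hXm hXi hXcdf
  have hn1 : (1:ℝ) ≤ (nT : ℝ) - 1 := by
    have : (2:ℝ) ≤ (nT : ℝ) := by exact_mod_cast hnT
    linarith
  set n : ℝ := (nT : ℝ) - 1 with hn_def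
  have hnpos : 0 < n := lt_of_lt_of_le one_pos hn1
  have hK256 : (256:ℝ) ≤ (K:ℝ) := by exact_mod_cast hK
  have hKpos : (0:ℝ) < (K:ℝ) := by linarith
  set L : ℝ := Real.log (Real.sqrt K) with hL_def
  have hLlog : L = Real.log K / 2 := by
    rw [hL_def, Real.log_sqrt hKpos.le]
  -- log K ≥ 1
  have hlog1 : (1:ℝ) ≤ Real.log K := by
    rw [Real.le_log_iff_exp_le hKpos]
    have := Real.exp_one_lt_d9
    linarith
  have hlogpos : (0:ℝ) < Real.log K := lt_of_lt_of_le one_pos hlog1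
  have hLpos : (0:ℝ) < L := by rw [hLlog]; linarith
  -- log K ≤ √K
  have hsqrtpos : (0:ℝ) < Real.sqrt K := Real.sqrt_pos.2 hKpos
  have hlogsqrt : Real.log K ≤ Real.sqrt K := by
    set q : ℝ := (K:ℝ) ^ ((1:ℝ)/4) with hq_def
    have hqpos : 0 < q := Real.rpow_pos_of_pos hKpos _
    have hq4 : (4:ℝ) ≤ q := by
      have h1 : ((256:ℝ)) ^ ((1:ℝ)/4) ≤ q :=
        Real.rpow_le_rpow (by norm_num) hK256 (by norm_num)
      have h2 : ((256:ℝ)) ^ ((1:ℝ)/4) = 4 := by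
        have : ((256:ℝ)) = (4:ℝ) ^ ((4:ℝ)) := by
          rw [show ((4:ℝ):ℝ) = ((4:ℕ):ℝ) by norm_num, Real.rpow_natCast]; norm_num
        rw [this, ← Real.rpow_mul (by norm_num)]
        norm_num
      linarith
    have hlogq : Real.log K = 4 * Real.log q := by
      rw [hq_def, Real.log_rpow hKpos]; ring
    have hlq : Real.log q ≤ q - 1 := Real.log_le_sub_one_of_pos hqpos
    have hqsq : q * q = Real.sqrt K := by
      rw [Real.sqrt_eq_rpow, hq_def, ← Real.rpow_add hKpos]
      norm_num
    nlinarith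
  have hLK : L ≤ (K:ℝ) := by
    have h1 : Real.sqrt K ≤ (K:ℝ) := by
      nlinarith [Real.sq_sqrt hKpos.le, Real.sqrt_nonneg (K:ℝ)]
    rw [hLlog]; linarith
  have hKL1 : (1:ℝ) ≤ (K:ℝ) * L := by nlinarith
  have h2B : (0:ℝ) < (2:ℝ) ^ B := Real.rpow_pos_of_pos two_pos B
  -- the cdf formula at points of the form y^(1/n) - 1
  have hcdf : ∀ y : ℝ, 0 < y → (2:ℝ) ^ B ≤ y →
      F (y ^ (1/n) - 1) = 1 - (2:ℝ) ^ B / y := by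
    intro y hy hy2
    rw [hF]
    have h2Bn : (2:ℝ) ^ (B / n) = ((2:ℝ) ^ B) ^ (1/n) := by
      rw [← Real.rpow_mul (by norm_num : (0:ℝ) ≤ 2)]
      ring_nf
    have hcond : (2:ℝ) ^ (B / n) - 1 ≤ y ^ (1/n) - 1 := by
      rw [h2Bn]
      have := Real.rpow_le_rpow h2B.le hy2 (by positivity : (0:ℝ) ≤ 1/n)
      linarith
    rw [if_pos hcond]
    have h1x : 1 + (y ^ (1/n) - 1) = y ^ (1/n) := by ring
    rw [h1x]
    have hcast : ((nT - 1 : ℕ) : ℝ) = n := by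
      rw [hn_def, Nat.cast_sub (by omega : 1 ≤ nT)]
      norm_num
    have hpow : (y ^ (1/n)) ^ (nT - 1) = y := by
      rw [← Real.rpow_natCast (y ^ (1/n)) (nT - 1), hcast,
        ← Real.rpow_mul hy.le, one_div, inv_mul_cancel₀ (ne_of_gt hnpos),
        Real.rpow_one]
    rw [hpow, ← div_eq_mul_inv]
  -- the distribution of the max
  have hne : Nonempty (Fin K) := ⟨⟨0, by omega⟩⟩
  have hmax : ∀ x : ℝ, μ {ω | (⨆ i, X i ω) ≤ x} = ENNReal.ofReal (F x) ^ K := by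
    intro x
    have hset : {ω | (⨆ i, X i ω) ≤ x} = ⋂ i, X i ⁻¹' Set.Iic x := by
      ext ω
      simp only [Set.mem_setOf_eq, Set.mem_iInter, Set.mem_preimage, Set.mem_Iic]
      constructor
      · intro h i
        exact le_trans (le_ciSup (f := fun j => X j ω) (Set.Finite.bddAbove (Set.finite_range _)) i) h
      · exact fun h => ciSup_le h
    rw [hset, show (⋂ i, X i ⁻¹' Set.Iic x) = ⋂ i ∈ Finset.univ, X i ⁻¹' Set.Iic x by simp]
    rw [hXi.measure_inter_preimage_eq_mul Finset.univ
      (sets := fun _ => Set.Iic x) (fun i _ => measurableSet_Iic)]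
    have heach : ∀ i : Fin K, μ (X i ⁻¹' Set.Iic x) = ENNReal.ofReal (F x) := by
      intro i
      have h1 := hXcdf i x
      have h2 : X i ⁻¹' Set.Iic x = {ω | X i ω ≤ x} := rfl
      rw [h2, ← h1, ENNReal.ofReal_toReal (measure_ne_top μ _)]
    rw [Finset.prod_congr rfl (fun i _ => heach i), Finset.prod_const,
      Finset.card_univ, Fintype.card_fin]
  set a : ℝ := ((2:ℝ) ^ B * K / L) ^ (1/n) - 1 with ha_def
  set b : ℝ := ((2:ℝ) ^ B * K * L) ^ (1/n) - 1 with hb_def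
  have hFb : F b = 1 - 1 / ((K:ℝ) * L) := by
    rw [hb_def, hcdf ((2:ℝ) ^ B * K * L) (by positivity) (by nlinarith)]
    congr 1
    have h2B' : (2:ℝ) ^ B ≠ 0 := ne_of_gt h2B
    field_simp
  have hFa : F a = 1 - L / K := by
    rw [ha_def, hcdf ((2:ℝ) ^ B * K / L) (by positivity)
      (by rw [le_div_iff₀ hLpos]; nlinarith)]
    congr 1
    have h2B' : (2:ℝ) ^ B ≠ 0 := ne_of_gt h2B
    have hK' : (K:ℝ) ≠ 0 := ne_of_gt hKpos
    have hL' : L ≠ 0 := ne_of_gt hLpos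
    field_simp
  have hFb0 : 0 ≤ F b := by
    rw [hFb]
    have : 1 / ((K:ℝ) * L) ≤ 1 := by
      rw [div_le_one (by nlinarith)]; linarith
    linarith
  have hFa0 : 0 ≤ F a := by
    rw [hFa]
    have : L / (K:ℝ) ≤ 1 := by rw [div_le_one hKpos]; linarith
    linarith
  -- Bernoulli lower bound for (F b)^K
  have hBern : 1 - 1 / L ≤ (F b) ^ K := by
    have h1 : (1:ℝ) / ((K:ℝ) * L) ≤ 1 := by
      rw [div_le_one (by nlinarith)]; linarith
    have h2 : -2 ≤ -(1 / ((K:ℝ) * L)) := by linarith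
    have h3 := one_add_mul_le_pow h2 K
    have h4 : 1 + (K:ℝ) * (-(1 / ((K:ℝ) * L))) = 1 - 1 / L := by
      have hK' : (K:ℝ) ≠ 0 := ne_of_gt hKpos
      have hL' : L ≠ 0 := ne_of_gt hLpos
      field_simp
      ring
    have h5 : (1:ℝ) + (-(1 / ((K:ℝ) * L))) = F b := by rw [hFb]; ring
    rw [h4, h5] at h3
    exact h3
  -- Exponential upper bound for (F a)^K
  have hExp : (F a) ^ K ≤ (Real.sqrt K)⁻¹ := by
    have h1 : F a ≤ Real.exp (-(L / K)) := by
      have := Real.add_one_le_exp (-(L / K))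
      rw [hFa]; linarith
    have h2 : (F a) ^ K ≤ Real.exp (-(L / K)) ^ K := pow_le_pow_left₀ hFa0 h1 K
    have h3 : Real.exp (-(L / K)) ^ K = Real.exp (-L) := by
      rw [← Real.exp_nat_mul]
      congr 1
      have hK' : (K:ℝ) ≠ 0 := ne_of_gt hKpos
      field_simp
    rw [h3] at h2
    rw [Real.exp_neg, hL_def, Real.exp_log hsqrtpos] at h2
    exact h2
  -- measure comparison
  set E : Set Ω := {ω | a ≤ (⨆ i, X i ω) ∧ (⨆ i, X i ω) ≤ b} with hE_def
  have hsub : {ω | (⨆ i, X i ω) ≤ b} ⊆ E ∪ {ω | (⨆ i, X i ω) ≤ a} := by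
    intro ω hω
    by_cases h : a ≤ (⨆ i, X i ω)
    · exact Or.inl ⟨h, hω⟩
    · exact Or.inr (le_of_lt (lt_of_not_ge h))
  have hmeas : μ {ω | (⨆ i, X i ω) ≤ b} ≤ μ E + μ {ω | (⨆ i, X i ω) ≤ a} :=
    le_trans (measure_mono hsub) (measure_union_le _ _)
  have htb : (μ {ω | (⨆ i, X i ω) ≤ b}).toReal = (F b) ^ K := by
    rw [hmax b, ENNReal.toReal_pow, ENNReal.toReal_ofReal hFb0]
  have hta : (μ {ω | (⨆ i, X i ω) ≤ a}).toReal = (F a) ^ K := by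
    rw [hmax a, ENNReal.toReal_pow, ENNReal.toReal_ofReal hFa0]
  have hreal : (F b) ^ K ≤ (μ E).toReal + (F a) ^ K := by
    rw [← htb, ← hta]
    have := ENNReal.toReal_mono
      (by simp [ENNReal.add_ne_top, measure_ne_top] : μ E + μ {ω | (⨆ i, X i ω) ≤ a} ≠ ⊤)
      hmeas
    rwa [ENNReal.toReal_add (measure_ne_top μ _) (measure_ne_top μ _)] at this
  -- arithmetic conclusion
  have hfinal : 1 - 3 / Real.log K ≤ (μ E).toReal := by
    have hinvL : 1 / L = 2 / Real.log K := by
      rw [hLlog]; field_simp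
    have hinvsqrt : (Real.sqrt K)⁻¹ ≤ 1 / Real.log K := by
      rw [inv_eq_one_div]
      exact one_div_le_one_div_of_le hlogpos hlogsqrt
    have : 1 - 1 / L - (Real.sqrt K)⁻¹ ≤ (μ E).toReal := by
      have := hBern.trans (by linarith : (F b) ^ K ≤ (μ E).toReal + (F a) ^ K)
      linarith
    rw [hinvL] at this
    have h3 : (3:ℝ) / Real.log K = 2 / Real.log K + 1 / Real.log K := by ring
    linarith
  -- convert to ENNReal
  have h0 : (0:ℝ) ≤ 3 / Real.log K := by positivity
  calc 1 - ENNReal.ofReal (3 / Real.log K)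
      = ENNReal.ofReal (1 - 3 / Real.log K) := by
        rw [ENNReal.ofReal_sub _ h0, ENNReal.ofReal_one]
    _ ≤ μ E := (ENNReal.ofReal_le_iff_le_toReal (measure_ne_top μ E)).2 hfinal
end

section
/- Let n_T ≥ 2 be an integer and d > 0 real. Let F be the cumulative distribution function of a real random variable and suppose there exist constants C_0 > 0 and x_0 > 0 such that |1 − F(x) − d x^{−(n_T−1)}| ≤ C_0 x^{−n_T} for all x ≥ x_0. For each K ≥ 2 let X_1, …, X_K be i.i.d. with c.d.f. F and M_K = max_{1≤k≤K} X_k. Then there exist constants C > 0 and K_0 such that for all K ≥ K_0, P( (d K / log √K)^{1/(n_T−1)} ≤ M_K ≤ (d K log √K)^{1/(n_T−1)} ) ≥ 1 − C / log K. -/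
open MeasureTheory ProbabilityTheory

lemma max_cdf {K : ℕ} (hK : 0 < K) {Ω : Type} [MeasurableSpace Ω] (μ : Measure Ω)
    [IsProbabilityMeasure μ] (X : Fin K → Ω → ℝ)
    (hind : iIndepFun X μ)
    (F : ℝ → ℝ) (hFd : ∀ i x, (μ {ω | X i ω ≤ x}).toReal = F x) (x : ℝ) :
    μ {ω | (⨆ i, X i ω) ≤ x} = ENNReal.ofReal (F x ^ K) := by
  haveI : Nonempty (Fin K) := ⟨⟨0, hK⟩⟩
  have hF0 : 0 ≤ F x := (hFd ⟨0, hK⟩ x) ▸ ENNReal.toReal_nonneg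
  have hset : {ω | (⨆ i, X i ω) ≤ x} = ⋂ i, X i ⁻¹' Set.Iic x := by
    ext ω
    simp only [Set.mem_setOf_eq, Set.mem_iInter, Set.mem_preimage, Set.mem_Iic]
    exact ciSup_le_iff (Set.finite_range _).bddAbove
  have hprod := (iIndepFun_iff_measure_inter_preimage_eq_mul.mp hind) Finset.univ
    (sets := fun _ => Set.Iic x) (fun i _ => measurableSet_Iic)
  have hfac : ∀ i : Fin K, μ (X i ⁻¹' Set.Iic x) = ENNReal.ofReal (F x) := by
    intro i
    have h := hFd i x
    rw [← h, ENNReal.ofReal_toReal (measure_ne_top μ _)]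
    rfl
  rw [hset]
  have : (⋂ i ∈ (Finset.univ : Finset (Fin K)), X i ⁻¹' Set.Iic x) = ⋂ i, X i ⁻¹' Set.Iic x := by
    simp
  rw [← this, hprod]
  simp only [hfac, Finset.prod_const, Finset.card_univ, Fintype.card_fin]
  rw [ENNReal.ofReal_pow hF0]

set_option maxHeartbeats 1000000 in
/-- Second part of Lemma 9 (equation (47)) in its general form: for i.i.d. random
variables whose common c.d.f. satisfies `1 - F(x) = d x^{-(nT-1)} + O(x^{-nT})`, the
maximum `M_K` satisfies
`P((dK/log √K)^{1/(nT-1)} ≤ M_K ≤ (dK log √K)^{1/(nT-1)}) ≥ 1 - O(1/log K)`. -/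
theorem stmt_11 (nT : ℕ) (hnT : 2 ≤ nT) (d : ℝ) (hd : 0 < d)
    (F : ℝ → ℝ)
    (hcdf : ∃ ν : Measure ℝ, IsProbabilityMeasure ν ∧ ∀ x, (ν (Set.Iic x)).toReal = F x)
    (C₀ x₀ : ℝ) (hC₀ : 0 < C₀) (hx₀ : 0 < x₀)
    (htail : ∀ x : ℝ, x₀ ≤ x →
      |1 - F x - d / x ^ (nT - 1)| ≤ C₀ / x ^ nT) :
    ∃ C > (0:ℝ), ∃ K₀ : ℕ, ∀ K : ℕ, K₀ ≤ K →
      ∀ (Ω : Type) [MeasurableSpace Ω] (μ : Measure Ω) [IsProbabilityMeasure μ],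
        ∀ X : Fin K → Ω → ℝ, (∀ i, Measurable (X i)) →
          iIndepFun X μ →
          (∀ i x, (μ {ω | X i ω ≤ x}).toReal = F x) →
          1 - ENNReal.ofReal (C / Real.log K) ≤
            μ {ω | (d * K / Real.log (Real.sqrt K)) ^ (1 / ((nT : ℝ) - 1)) ≤ (⨆ i, X i ω) ∧
                   (⨆ i, X i ω) ≤ (d * K * Real.log (Real.sqrt K)) ^ (1 / ((nT : ℝ) - 1))} := by
  obtain ⟨ν, hν, hνF⟩ := hcdf
  have hF0 : ∀ x, 0 ≤ F x := fun x => (hνF x) ▸ ENNReal.toReal_nonneg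
  have hF1 : ∀ x, F x ≤ 1 := by
    intro x
    rw [← hνF x]
    calc (ν (Set.Iic x)).toReal ≤ (ν Set.univ).toReal :=
          ENNReal.toReal_mono (measure_ne_top ν _) (measure_mono (Set.subset_univ _))
      _ = 1 := by simp
  -- notation
  set m : ℕ := nT - 1 with hm
  have hm1 : 1 ≤ m := by omega
  have hmcast : ((m : ℝ)) = (nT : ℝ) - 1 := by
    have : (nT : ℝ) = ((m + 1 : ℕ) : ℝ) := by norm_cast; omega
    rw [this]; push_cast; ring
  have hne : (nT : ℝ) - 1 ≠ 0 := by
    rw [← hmcast]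
    exact Nat.cast_ne_zero.mpr (by omega)
  have hepos : 0 < 1 / ((nT : ℝ) - 1) := by
    rw [← hmcast]; positivity
  have hpowm : ∀ a : ℝ, 0 ≤ a → (a ^ (1 / ((nT : ℝ) - 1))) ^ m = a := by
    intro a ha
    rw [← Real.rpow_natCast (a ^ (1 / ((nT : ℝ) - 1))) m, ← Real.rpow_mul ha, hmcast,
      one_div, inv_mul_cancel₀ hne, Real.rpow_one]
  have hnTm : nT = m + 1 := by omega
  -- constants
  refine ⟨6 + 2 * C₀ / d, by positivity, ?_⟩
  set T : ℝ := max 1 (max (x₀ ^ m) ((2 * C₀ / d) ^ m)) with hT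
  have hT1 : 1 ≤ T := le_max_left _ _
  set K₀ : ℕ := max 8 (⌈(T / d) ^ 2⌉₊ + 1) with hK₀
  refine ⟨K₀, ?_⟩
  intro K hK Ω _ μ _ X hX hind hdist
  have hK8 : 8 ≤ K := le_trans (le_max_left _ _) hK
  have hKpos : (0 : ℝ) < K := by positivity
  have hKT : (T / d) ^ 2 ≤ (K : ℝ) := by
    have h1 : ⌈(T / d) ^ 2⌉₊ ≤ K := by omega
    calc (T / d) ^ 2 ≤ (⌈(T / d) ^ 2⌉₊ : ℝ) := Nat.le_ceil _
      _ ≤ (K : ℝ) := by exact_mod_cast h1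
  rw [Real.log_sqrt hKpos.le]
  set lg : ℝ := Real.log K with hlg
  have hlg2 : 2 ≤ lg := by
    rw [hlg, Real.le_log_iff_exp_le hKpos]
    have h1 : Real.exp 1 < 2.7182818286 := Real.exp_one_lt_d9
    have h2 : Real.exp 2 = Real.exp 1 * Real.exp 1 := by
      rw [← Real.exp_add]; norm_num
    have h3 : (8 : ℝ) ≤ K := by exact_mod_cast hK8
    nlinarith [Real.exp_pos 1]
  have hlgpos : 0 < lg := by linarith
  have hL1 : 1 ≤ lg / 2 := by linarith
  have hLpos : 0 < lg / 2 := by linarith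
  set b : ℝ := d * K / (lg / 2) with hb
  set a : ℝ := d * K * (lg / 2) with ha
  have hsq : 0 < Real.sqrt K := Real.sqrt_pos.mpr hKpos
  have hbT : T ≤ b := by
    have h1 : lg / 2 ≤ Real.sqrt K := by
      have h0 := Real.log_le_sub_one_of_pos hsq
      rw [Real.log_sqrt hKpos.le, ← hlg] at h0; linarith
    have h2 : T / d ≤ Real.sqrt K := by
      calc T / d = Real.sqrt ((T / d) ^ 2) := by
            rw [Real.sqrt_sq (by positivity)]
        _ ≤ Real.sqrt K := Real.sqrt_le_sqrt hKT
    have h3 : T ≤ d * Real.sqrt K := by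
      rw [div_le_iff₀ hd] at h2; linarith [h2]
    calc T ≤ d * Real.sqrt K := h3
      _ = d * K / Real.sqrt K := by
          rw [mul_div_assoc, Real.div_sqrt]
      _ ≤ d * K / (lg / 2) := by
          apply div_le_div_of_nonneg_left (by positivity) hLpos h1
  have hbpos : 0 < b := lt_of_lt_of_le (by linarith) hbT
  have haT : T ≤ a := by
    calc T ≤ b := hbT
      _ ≤ d * K := by
          rw [hb]; exact div_le_self (by positivity) hL1
      _ ≤ a := le_mul_of_one_le_right (by positivity) hL1
  have hapos : 0 < a := lt_of_lt_of_le (by linarith) haT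
  -- u and l
  set u : ℝ := a ^ (1 / ((nT : ℝ) - 1)) with hu
  set l : ℝ := b ^ (1 / ((nT : ℝ) - 1)) with hl
  have hu1 : 1 ≤ u := Real.one_le_rpow (le_trans hT1 haT) hepos.le
  have hl1 : 1 ≤ l := Real.one_le_rpow (le_trans hT1 hbT) hepos.le
  have hum : u ^ m = a := hpowm a hapos.le
  have hlm : l ^ m = b := hpowm b hbpos.le
  have hunT : u ^ nT = a * u := by rw [hnTm, pow_succ, hum]
  have hlnT : l ^ nT = b * l := by rw [hnTm, pow_succ, hlm]
  have hux₀ : x₀ ≤ u := by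
    have h1 : x₀ ^ m ≤ u ^ m := by
      rw [hum]; exact le_trans (le_trans (le_max_left _ _) (le_max_right _ _)) haT
    exact le_of_pow_le_pow_left₀ (by omega) (by linarith) h1
  have hlx₀ : x₀ ≤ l := by
    have h1 : x₀ ^ m ≤ l ^ m := by
      rw [hlm]; exact le_trans (le_trans (le_max_left _ _) (le_max_right _ _)) hbT
    exact le_of_pow_le_pow_left₀ (by omega) (by linarith) h1
  have hl2C : 2 * C₀ / d ≤ l := by
    have h1 : (2 * C₀ / d) ^ m ≤ l ^ m := by
      rw [hlm]; exact le_trans (le_trans (le_max_right _ _) (le_max_right _ _)) hbT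
    exact le_of_pow_le_pow_left₀ (by omega) (by linarith) h1
  -- upper tail estimate
  have hKne : (K : ℝ) ≠ 0 := ne_of_gt hKpos
  have hfu : (K : ℝ) * (1 - F u) ≤ (2 + 2 * C₀ / d) / lg := by
    have htu := htail u hux₀
    rw [abs_le, hum, hunT] at htu
    have h1 : 1 - F u ≤ d / a + C₀ / (a * u) := by linarith [htu.2]
    have h2 : d / a = 2 / ((K : ℝ) * lg) := by
      rw [ha]; field_simp
    have h3 : C₀ / (a * u) ≤ (2 * C₀ / d) / ((K : ℝ) * lg) := by
      have : C₀ / (a * u) ≤ C₀ / (a * 1) := by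
        apply div_le_div_of_nonneg_left hC₀.le (by positivity)
        nlinarith
      calc C₀ / (a * u) ≤ C₀ / (a * 1) := this
        _ = (2 * C₀ / d) / ((K : ℝ) * lg) := by rw [ha]; field_simp
    calc (K : ℝ) * (1 - F u) ≤ (K : ℝ) * (2 / ((K : ℝ) * lg) + (2 * C₀ / d) / ((K : ℝ) * lg)) := by
          apply mul_le_mul_of_nonneg_left _ hKpos.le
          rw [← h2]; linarith
      _ = (2 + 2 * C₀ / d) / lg := by field_simp
  -- lower tail estimate
  have hFl : F l ≤ 1 - lg / (4 * K) := by
    have htl := htail l hlx₀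
    rw [abs_le, hlm, hlnT] at htl
    have h1 : d / b - C₀ / (b * l) ≤ 1 - F l := by linarith [htl.1]
    have h2 : C₀ / (b * l) ≤ d / (2 * b) := by
      have hCd : 0 < 2 * C₀ / d := by positivity
      have h3 : C₀ / (b * l) ≤ C₀ / (b * (2 * C₀ / d)) := by
        apply div_le_div_of_nonneg_left hC₀.le (by positivity)
        nlinarith
      calc C₀ / (b * l) ≤ C₀ / (b * (2 * C₀ / d)) := h3
        _ = d / (2 * b) := by field_simp
    have h4 : d / (2 * b) = lg / (4 * K) := by
      rw [hb]; field_simp; ring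
    have h5 : d / b = lg / (2 * K) := by
      rw [hb]; field_simp
    have h6 : lg / (2 * K) - lg / (4 * K) = lg / (4 * K) := by field_simp; ring
    nlinarith [h1, h2]
  have hFlK : F l ^ K ≤ 4 / lg := by
    have ht : lg / (4 * K) ≤ 1 := by
      have : lg ≤ K := le_trans (by linarith [Real.log_le_sub_one_of_pos hKpos]) (le_refl _)
      calc lg / (4 * K) ≤ K / (4 * K) := by
            apply div_le_div_of_nonneg_right this (by positivity)
        _ ≤ 1 := by rw [div_le_one (by positivity)]; nlinarith
    have h1 : F l ^ K ≤ (1 - lg / (4 * K)) ^ K :=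
      pow_le_pow_left₀ (hF0 l) hFl K
    have h2 : (1 - lg / (4 * K)) ^ K ≤ Real.exp (-(lg / (4 * K))) ^ K := by
      apply pow_le_pow_left₀ (by linarith)
      linarith [Real.add_one_le_exp (-(lg / (4 * K)))]
    have h3 : Real.exp (-(lg / (4 * K))) ^ K = Real.exp (-(lg / 4)) := by
      rw [← Real.exp_nat_mul]
      congr 1
      field_simp
    have h4 : Real.exp (-(lg / 4)) ≤ 4 / lg := by
      have hp := Real.exp_pos (lg / 4)
      have hE : lg ≤ 4 * Real.exp (lg / 4) := by
        nlinarith [Real.add_one_le_exp (lg / 4)]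
      rw [Real.exp_neg, le_div_iff₀ hlgpos, inv_mul_le_iff₀ hp]
      nlinarith
    calc F l ^ K ≤ (1 - lg / (4 * K)) ^ K := h1
      _ ≤ Real.exp (-(lg / (4 * K))) ^ K := h2
      _ = Real.exp (-(lg / 4)) := h3
      _ ≤ 4 / lg := h4
  -- Bernoulli bound for the upper event
  have hber : 1 - F u ^ K ≤ (K : ℝ) * (1 - F u) := by
    have h := one_add_mul_le_pow (a := F u - 1) (by linarith [hF0 u]) K
    have he : (1 + (F u - 1)) = F u := by ring
    rw [he] at h
    have hr : (K : ℝ) * (F u - 1) = -((K : ℝ) * (1 - F u)) := by ring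
    linarith
  have h1FuK : 1 - F u ^ K ≤ (2 + 2 * C₀ / d) / lg := le_trans hber hfu
  -- assemble probabilities
  haveI : Nonempty (Fin K) := ⟨⟨0, by omega⟩⟩
  have hmaxu := max_cdf (by omega) μ X hind F hdist u
  have hmaxl := max_cdf (by omega) μ X hind F hdist l
  have hSu : MeasurableSet {ω | (⨆ i, X i ω) ≤ u} := by
    have hs : {ω | (⨆ i, X i ω) ≤ u} = ⋂ i, X i ⁻¹' Set.Iic u := by
      ext ω
      simp only [Set.mem_setOf_eq, Set.mem_iInter, Set.mem_preimage, Set.mem_Iic]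
      exact ciSup_le_iff (Set.finite_range _).bddAbove
    rw [hs]
    exact MeasurableSet.iInter fun i => (hX i) measurableSet_Iic
  set G := {ω | l ≤ (⨆ i, X i ω) ∧ (⨆ i, X i ω) ≤ u} with hG
  have hsub : Gᶜ ⊆ {ω | (⨆ i, X i ω) ≤ l} ∪ {ω | (⨆ i, X i ω) ≤ u}ᶜ := by
    intro ω hω
    simp only [hG, Set.mem_compl_iff, Set.mem_setOf_eq, not_and_or, not_le] at hω
    simp only [Set.mem_union, Set.mem_compl_iff, Set.mem_setOf_eq, not_le]
    rcases hω with h | h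
    · exact Or.inl h.le
    · exact Or.inr h
  have hcompl : μ ({ω | (⨆ i, X i ω) ≤ u}ᶜ) = ENNReal.ofReal (1 - F u ^ K) := by
    rw [prob_compl_eq_one_sub hSu, hmaxu, ← ENNReal.ofReal_one,
      ← ENNReal.ofReal_sub 1 (pow_nonneg (hF0 u) K)]
  have hGc : μ Gᶜ ≤ ENNReal.ofReal ((6 + 2 * C₀ / d) / lg) := by
    calc μ Gᶜ ≤ μ ({ω | (⨆ i, X i ω) ≤ l} ∪ {ω | (⨆ i, X i ω) ≤ u}ᶜ) := measure_mono hsub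
      _ ≤ μ {ω | (⨆ i, X i ω) ≤ l} + μ ({ω | (⨆ i, X i ω) ≤ u}ᶜ) := measure_union_le _ _
      _ = ENNReal.ofReal (F l ^ K) + ENNReal.ofReal (1 - F u ^ K) := by rw [hmaxl, hcompl]
      _ ≤ ENNReal.ofReal (4 / lg) + ENNReal.ofReal ((2 + 2 * C₀ / d) / lg) :=
          add_le_add (ENNReal.ofReal_le_ofReal hFlK) (ENNReal.ofReal_le_ofReal h1FuK)
      _ = ENNReal.ofReal ((6 + 2 * C₀ / d) / lg) := by
          rw [← ENNReal.ofReal_add (by positivity) (by positivity)]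
          congr 1
          field_simp
          ring
  have hlast : (1 : ENNReal) ≤ μ G + μ Gᶜ := by
    conv_lhs => rw [← measure_univ (μ := μ), ← Set.union_compl_self G]
    exact measure_union_le _ _
  calc 1 - ENNReal.ofReal ((6 + 2 * C₀ / d) / lg) ≤ 1 - μ Gᶜ := tsub_le_tsub_left hGc 1
    _ ≤ μ G := tsub_le_iff_right.mpr hlast
end
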